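/- arXiv:1501.04783 — 8 statements merged into one kernel-verified Lean document; each statement's English description precedes it below -/
import Mathlib

section
/- For all vectors u, v, w in ℝ⁷, the associator equality holds: φ₀(u,v,w)² + ‖χ(u,v,w)‖² = ‖u∧v∧w‖², where ‖u∧v∧w‖² denotes the determinant of the Gram matrix (⟨u,u⟩,⟨u,v⟩,⟨u,w⟩; ⟨v,u⟩,⟨v,v⟩,⟨v,w⟩; ⟨w,u⟩,⟨w,v⟩,⟨w,w⟩). -/
open scoped RealInnerProductSpace

noncomputable section

/-- ℝ⁷ with its Euclidean inner product. -/
abbrev V7 := EuclideanSpace ℝ (Fin 7)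

/-- The standard G₂ 3-form φ₀ = e¹²³+e¹⁴⁵+e¹⁶⁷+e²⁴⁶−e²⁵⁷−e³⁴⁷−e³⁵⁶ on ℝ⁷
(indices shifted to 0-based), written as a trilinear alternating function. -/
def phi0 : (Fin 3 → V7) → ℝ := fun v =>
  let m : Fin 7 → Fin 7 → Fin 7 → ℝ := fun i j k =>
    Matrix.det !![v 0 i, v 0 j, v 0 k; v 1 i, v 1 j, v 1 k; v 2 i, v 2 j, v 2 k]
  m 0 1 2 + m 0 3 4 + m 0 5 6 + m 1 3 5 - m 1 4 6 - m 2 3 6 - m 2 4 5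

/-- The 4-form ∗φ₀ = e⁴⁵⁶⁷+e²³⁶⁷+e²³⁴⁵+e¹³⁵⁷−e¹³⁴⁶−e¹²⁵⁶−e¹²⁴⁷ (0-based indices). -/
def starPhi0 : (Fin 4 → V7) → ℝ := fun v =>
  let m : Fin 7 → Fin 7 → Fin 7 → Fin 7 → ℝ := fun i j k l =>
    Matrix.det !![v 0 i, v 0 j, v 0 k, v 0 l; v 1 i, v 1 j, v 1 k, v 1 l;
                  v 2 i, v 2 j, v 2 k, v 2 l; v 3 i, v 3 j, v 3 k, v 3 l]
  m 3 4 5 6 + m 1 2 5 6 + m 1 2 3 4 + m 0 2 4 6 - m 0 2 3 5 - m 0 1 4 5 - m 0 1 3 6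

/-- The cross product on ℝ⁷: the unique vector with ⟨u×v, z⟩ = φ₀(u,v,z) for all z. -/
def cross (u v : V7) : V7 := WithLp.toLp 2 (fun i => phi0 ![u, v, EuclideanSpace.single i 1])

/-- The triple cross product χ: the unique vector with ⟨χ(u,v,w), z⟩ = ∗φ₀(u,v,w,z). -/
def chi (u v w : V7) : V7 := WithLp.toLp 2 (fun i => starPhi0 ![u, v, w, EuclideanSpace.single i 1])

/-- Interior product ξ⌟α : contraction of a (k+1)-form with ξ in its first slot. -/
def iprod {k : ℕ} (ξ : V7) (α : (Fin (k + 1) → V7) → ℝ) : (Fin k → V7) → ℝ :=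
  fun v => α (Fin.cons ξ v)

/-- Wedge product of alternating forms (determinant convention). -/
def wedge {p q : ℕ} (α : (Fin p → V7) → ℝ) (β : (Fin q → V7) → ℝ) :
    (Fin (p + q) → V7) → ℝ := fun v =>
  (1 / ((p.factorial : ℝ) * q.factorial)) *
    ∑ σ : Equiv.Perm (Fin (p + q)), ((Equiv.Perm.sign σ : ℤ) : ℝ) *
      α (fun i => v (σ (Fin.castAdd q i))) * β (fun j => v (σ (Fin.natAdd p j)))

/-- The dual covector ξ^# = ⟨ξ,·⟩, as a 1-form. -/
def dualCov (ξ : V7) : (Fin 1 → V7) → ℝ := fun v => ⟪ξ, v 0⟫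

/-- The standard volume form e¹∧⋯∧e⁷ on ℝ⁷. -/
def vol7 : (Fin 7 → V7) → ℝ := fun v => Matrix.det (Matrix.of fun i j => v i j)



private lemma det3 (a b c d e f g h i : ℝ) :
    Matrix.det !![a,b,c;d,e,f;g,h,i] = a*(e*i-f*h)-b*(d*i-f*g)+c*(d*h-e*g) := by
  simp [Matrix.det_fin_three]; ring

private lemma det4 (a b c d e f g h i j k l m n o p : ℝ) :
    Matrix.det !![a,b,c,d;e,f,g,h;i,j,k,l;m,n,o,p] =
      a*(f*(k*p-l*o)-g*(j*p-l*n)+h*(j*o-k*n))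
      - b*(e*(k*p-l*o)-g*(i*p-l*m)+h*(i*o-k*m))
      + c*(e*(j*p-l*n)-f*(i*p-l*m)+h*(i*n-j*m))
      - d*(e*(j*o-k*n)-f*(i*o-k*m)+g*(i*n-j*m)) := by
  rw [Matrix.det_succ_row_zero]
  simp [Fin.sum_univ_succ, Matrix.det_fin_three, Fin.succAbove]
  ring

set_option maxHeartbeats 4000000 in
/-- the associator equality
φ₀(u,v,w)² + ‖χ(u,v,w)‖² = ‖u∧v∧w‖² (Gram determinant). -/
theorem associator_equality (u v w : V7) :
    (phi0 ![u, v, w]) ^ 2 + ‖chi u v w‖ ^ 2 =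
      Matrix.det !![⟪u, u⟫, ⟪u, v⟫, ⟪u, w⟫;
                    ⟪v, u⟫, ⟪v, v⟫, ⟪v, w⟫;
                    ⟪w, u⟫, ⟪w, v⟫, ⟪w, w⟫] := by
  have hnorm : ‖chi u v w‖^2 = ∑ i, chi u v w i ^ 2 := by
    rw [EuclideanSpace.norm_sq_eq]; simp [sq_abs]
  rw [hnorm]
  have hc0 : chi u v w 0 = -(u 2*(v 4*w 6-v 6*w 4)-u 4*(v 2*w 6-v 6*w 2)+u 6*(v 2*w 4-v 4*w 2)) + (u 2*(v 3*w 5-v 5*w 3)-u 3*(v 2*w 5-v 5*w 2)+u 5*(v 2*w 3-v 3*w 2)) + (u 1*(v 4*w 5-v 5*w 4)-u 4*(v 1*w 5-v 5*w 1)+u 5*(v 1*w 4-v 4*w 1)) + (u 1*(v 3*w 6-v 6*w 3)-u 3*(v 1*w 6-v 6*w 1)+u 6*(v 1*w 3-v 3*w 1)) := by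
    simp only [chi, PiLp.toLp_apply, starPhi0, det4, Matrix.cons_val_zero, Matrix.cons_val_one,
      Matrix.head_cons, Matrix.cons_val_two, Matrix.tail_cons, Matrix.cons_val_three,
      EuclideanSpace.single_apply, Fin.reduceEq, if_true, if_false, ite_true, ite_false]
    ring
  have hc1 : chi u v w 1 = -(u 2*(v 5*w 6-v 6*w 5)-u 5*(v 2*w 6-v 6*w 2)+u 6*(v 2*w 5-v 5*w 2)) - (u 2*(v 3*w 4-v 4*w 3)-u 3*(v 2*w 4-v 4*w 2)+u 4*(v 2*w 3-v 3*w 2)) - (u 0*(v 4*w 5-v 5*w 4)-u 4*(v 0*w 5-v 5*w 0)+u 5*(v 0*w 4-v 4*w 0)) - (u 0*(v 3*w 6-v 6*w 3)-u 3*(v 0*w 6-v 6*w 0)+u 6*(v 0*w 3-v 3*w 0)) := by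
    simp only [chi, PiLp.toLp_apply, starPhi0, det4, Matrix.cons_val_zero, Matrix.cons_val_one,
      Matrix.head_cons, Matrix.cons_val_two, Matrix.tail_cons, Matrix.cons_val_three,
      EuclideanSpace.single_apply, Fin.reduceEq, if_true, if_false, ite_true, ite_false]
    ring
  have hc2 : chi u v w 2 = (u 1*(v 5*w 6-v 6*w 5)-u 5*(v 1*w 6-v 6*w 1)+u 6*(v 1*w 5-v 5*w 1)) + (u 1*(v 3*w 4-v 4*w 3)-u 3*(v 1*w 4-v 4*w 1)+u 4*(v 1*w 3-v 3*w 1)) + (u 0*(v 4*w 6-v 6*w 4)-u 4*(v 0*w 6-v 6*w 0)+u 6*(v 0*w 4-v 4*w 0)) - (u 0*(v 3*w 5-v 5*w 3)-u 3*(v 0*w 5-v 5*w 0)+u 5*(v 0*w 3-v 3*w 0)) := by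
    simp only [chi, PiLp.toLp_apply, starPhi0, det4, Matrix.cons_val_zero, Matrix.cons_val_one,
      Matrix.head_cons, Matrix.cons_val_two, Matrix.tail_cons, Matrix.cons_val_three,
      EuclideanSpace.single_apply, Fin.reduceEq, if_true, if_false, ite_true, ite_false]
    ring
  have hc3 : chi u v w 3 = -(u 4*(v 5*w 6-v 6*w 5)-u 5*(v 4*w 6-v 6*w 4)+u 6*(v 4*w 5-v 5*w 4)) - (u 1*(v 2*w 4-v 4*w 2)-u 2*(v 1*w 4-v 4*w 1)+u 4*(v 1*w 2-v 2*w 1)) + (u 0*(v 2*w 5-v 5*w 2)-u 2*(v 0*w 5-v 5*w 0)+u 5*(v 0*w 2-v 2*w 0)) + (u 0*(v 1*w 6-v 6*w 1)-u 1*(v 0*w 6-v 6*w 0)+u 6*(v 0*w 1-v 1*w 0)) := by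
    simp only [chi, PiLp.toLp_apply, starPhi0, det4, Matrix.cons_val_zero, Matrix.cons_val_one,
      Matrix.head_cons, Matrix.cons_val_two, Matrix.tail_cons, Matrix.cons_val_three,
      EuclideanSpace.single_apply, Fin.reduceEq, if_true, if_false, ite_true, ite_false]
    ring
  have hc4 : chi u v w 4 = (u 3*(v 5*w 6-v 6*w 5)-u 5*(v 3*w 6-v 6*w 3)+u 6*(v 3*w 5-v 5*w 3)) + (u 1*(v 2*w 3-v 3*w 2)-u 2*(v 1*w 3-v 3*w 1)+u 3*(v 1*w 2-v 2*w 1)) - (u 0*(v 2*w 6-v 6*w 2)-u 2*(v 0*w 6-v 6*w 0)+u 6*(v 0*w 2-v 2*w 0)) + (u 0*(v 1*w 5-v 5*w 1)-u 1*(v 0*w 5-v 5*w 0)+u 5*(v 0*w 1-v 1*w 0)) := by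
    simp only [chi, PiLp.toLp_apply, starPhi0, det4, Matrix.cons_val_zero, Matrix.cons_val_one,
      Matrix.head_cons, Matrix.cons_val_two, Matrix.tail_cons, Matrix.cons_val_three,
      EuclideanSpace.single_apply, Fin.reduceEq, if_true, if_false, ite_true, ite_false]
    ring
  have hc5 : chi u v w 5 = -(u 3*(v 4*w 6-v 6*w 4)-u 4*(v 3*w 6-v 6*w 3)+u 6*(v 3*w 4-v 4*w 3)) - (u 1*(v 2*w 6-v 6*w 2)-u 2*(v 1*w 6-v 6*w 1)+u 6*(v 1*w 2-v 2*w 1)) - (u 0*(v 2*w 3-v 3*w 2)-u 2*(v 0*w 3-v 3*w 0)+u 3*(v 0*w 2-v 2*w 0)) - (u 0*(v 1*w 4-v 4*w 1)-u 1*(v 0*w 4-v 4*w 0)+u 4*(v 0*w 1-v 1*w 0)) := by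
    simp only [chi, PiLp.toLp_apply, starPhi0, det4, Matrix.cons_val_zero, Matrix.cons_val_one,
      Matrix.head_cons, Matrix.cons_val_two, Matrix.tail_cons, Matrix.cons_val_three,
      EuclideanSpace.single_apply, Fin.reduceEq, if_true, if_false, ite_true, ite_false]
    ring
  have hc6 : chi u v w 6 = (u 3*(v 4*w 5-v 5*w 4)-u 4*(v 3*w 5-v 5*w 3)+u 5*(v 3*w 4-v 4*w 3)) + (u 1*(v 2*w 5-v 5*w 2)-u 2*(v 1*w 5-v 5*w 1)+u 5*(v 1*w 2-v 2*w 1)) + (u 0*(v 2*w 4-v 4*w 2)-u 2*(v 0*w 4-v 4*w 0)+u 4*(v 0*w 2-v 2*w 0)) - (u 0*(v 1*w 3-v 3*w 1)-u 1*(v 0*w 3-v 3*w 0)+u 3*(v 0*w 1-v 1*w 0)) := by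
    simp only [chi, PiLp.toLp_apply, starPhi0, det4, Matrix.cons_val_zero, Matrix.cons_val_one,
      Matrix.head_cons, Matrix.cons_val_two, Matrix.tail_cons, Matrix.cons_val_three,
      EuclideanSpace.single_apply, Fin.reduceEq, if_true, if_false, ite_true, ite_false]
    ring
  rw [Fin.sum_univ_seven, hc0, hc1, hc2, hc3, hc4, hc5, hc6]
  simp only [phi0, det3, Matrix.cons_val_zero, Matrix.cons_val_one,
    Matrix.head_cons, Matrix.cons_val_two, Matrix.tail_cons,
    PiLp.inner_apply, RCLike.inner_apply, conj_trivial, Fin.sum_univ_seven]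
  ring

end
end

section
/- Let u, v be orthonormal vectors in ℝ⁷ and let L = span{u, v, u×v} (an associative 3-plane). Define j(X) = χ(u,v,X). Then for all X, Y orthogonal to L: (1) j(X) is orthogonal to L; (2) j(j(X)) = −X; (3) ⟨j(X), j(Y)⟩ = ⟨X,Y⟩. Hence j is an orthogonal complex structure on the orthogonal complement L^⊥. -/
open scoped RealInnerProductSpace

noncomputable section

set_option maxHeartbeats 2000000

lemma det4my (A : Matrix (Fin 4) (Fin 4) ℝ) : A.det =
    A 0 0 * (A 1 1 * (A 2 2 * A 3 3 - A 2 3 * A 3 2) - A 1 2 * (A 2 1 * A 3 3 - A 2 3 * A 3 1) + A 1 3 * (A 2 1 * A 3 2 - A 2 2 * A 3 1))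
  - A 0 1 * (A 1 0 * (A 2 2 * A 3 3 - A 2 3 * A 3 2) - A 1 2 * (A 2 0 * A 3 3 - A 2 3 * A 3 0) + A 1 3 * (A 2 0 * A 3 2 - A 2 2 * A 3 0))
  + A 0 2 * (A 1 0 * (A 2 1 * A 3 3 - A 2 3 * A 3 1) - A 1 1 * (A 2 0 * A 3 3 - A 2 3 * A 3 0) + A 1 3 * (A 2 0 * A 3 1 - A 2 1 * A 3 0))
  - A 0 3 * (A 1 0 * (A 2 1 * A 3 2 - A 2 2 * A 3 1) - A 1 1 * (A 2 0 * A 3 2 - A 2 2 * A 3 0) + A 1 2 * (A 2 0 * A 3 1 - A 2 1 * A 3 0)) := by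
  rw [Matrix.det_succ_row_zero]
  simp [Fin.sum_univ_succ, Matrix.det_fin_three, Matrix.submatrix_apply]
  simp only [show (2:Fin 4).succAbove (2:Fin 3) = 3 by decide, show (3:Fin 4).succAbove (2:Fin 3) = 2 by decide,
    show (1:Fin 4).succAbove (2:Fin 3) = 3 by decide]
  ring

lemma inner7 (x y : V7) : ⟪x,y⟫ = x 0*y 0 + x 1*y 1 + x 2*y 2 + x 3*y 3 + x 4*y 4 + x 5*y 5 + x 6*y 6 := by
  simp [PiLp.inner_apply, RCLike.inner_apply, Fin.sum_univ_seven]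
  ring

lemma crossA0 (u v : V7) : cross u v 0 = u 1*v 2 - u 2*v 1 + u 3*v 4 - u 4*v 3 + u 5*v 6 - u 6*v 5 := by
  show phi0 ![u, v, EuclideanSpace.single 0 1] = _
  simp only [phi0, Matrix.det_fin_three, Matrix.cons_val', Matrix.cons_val_zero, Matrix.cons_val_one,
    Matrix.head_cons, Matrix.empty_val', Matrix.cons_val_fin_one, Matrix.head_fin_const,
    Matrix.cons_val_two, Matrix.tail_cons, Matrix.of_apply]
  simp only [EuclideanSpace.single_apply, Fin.reduceEq, reduceIte]
  ring

lemma crossA1 (u v : V7) : cross u v 1 = -u 0*v 2 + u 2*v 0 + u 3*v 5 - u 4*v 6 - u 5*v 3 + u 6*v 4 := by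
  show phi0 ![u, v, EuclideanSpace.single 1 1] = _
  simp only [phi0, Matrix.det_fin_three, Matrix.cons_val', Matrix.cons_val_zero, Matrix.cons_val_one,
    Matrix.head_cons, Matrix.empty_val', Matrix.cons_val_fin_one, Matrix.head_fin_const,
    Matrix.cons_val_two, Matrix.tail_cons, Matrix.of_apply]
  simp only [EuclideanSpace.single_apply, Fin.reduceEq, reduceIte]
  ring

lemma crossA2 (u v : V7) : cross u v 2 = u 0*v 1 - u 1*v 0 - u 3*v 6 - u 4*v 5 + u 5*v 4 + u 6*v 3 := by
  show phi0 ![u, v, EuclideanSpace.single 2 1] = _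
  simp only [phi0, Matrix.det_fin_three, Matrix.cons_val', Matrix.cons_val_zero, Matrix.cons_val_one,
    Matrix.head_cons, Matrix.empty_val', Matrix.cons_val_fin_one, Matrix.head_fin_const,
    Matrix.cons_val_two, Matrix.tail_cons, Matrix.of_apply]
  simp only [EuclideanSpace.single_apply, Fin.reduceEq, reduceIte]
  ring

lemma crossA3 (u v : V7) : cross u v 3 = -u 0*v 4 - u 1*v 5 + u 2*v 6 + u 4*v 0 + u 5*v 1 - u 6*v 2 := by
  show phi0 ![u, v, EuclideanSpace.single 3 1] = _
  simp only [phi0, Matrix.det_fin_three, Matrix.cons_val', Matrix.cons_val_zero, Matrix.cons_val_one,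
    Matrix.head_cons, Matrix.empty_val', Matrix.cons_val_fin_one, Matrix.head_fin_const,
    Matrix.cons_val_two, Matrix.tail_cons, Matrix.of_apply]
  simp only [EuclideanSpace.single_apply, Fin.reduceEq, reduceIte]
  ring

lemma crossA4 (u v : V7) : cross u v 4 = u 0*v 3 + u 1*v 6 + u 2*v 5 - u 3*v 0 - u 5*v 2 - u 6*v 1 := by
  show phi0 ![u, v, EuclideanSpace.single 4 1] = _
  simp only [phi0, Matrix.det_fin_three, Matrix.cons_val', Matrix.cons_val_zero, Matrix.cons_val_one,
    Matrix.head_cons, Matrix.empty_val', Matrix.cons_val_fin_one, Matrix.head_fin_const,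
    Matrix.cons_val_two, Matrix.tail_cons, Matrix.of_apply]
  simp only [EuclideanSpace.single_apply, Fin.reduceEq, reduceIte]
  ring

lemma crossA5 (u v : V7) : cross u v 5 = -u 0*v 6 + u 1*v 3 - u 2*v 4 - u 3*v 1 + u 4*v 2 + u 6*v 0 := by
  show phi0 ![u, v, EuclideanSpace.single 5 1] = _
  simp only [phi0, Matrix.det_fin_three, Matrix.cons_val', Matrix.cons_val_zero, Matrix.cons_val_one,
    Matrix.head_cons, Matrix.empty_val', Matrix.cons_val_fin_one, Matrix.head_fin_const,
    Matrix.cons_val_two, Matrix.tail_cons, Matrix.of_apply]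
  simp only [EuclideanSpace.single_apply, Fin.reduceEq, reduceIte]
  ring

lemma crossA6 (u v : V7) : cross u v 6 = u 0*v 5 - u 1*v 4 - u 2*v 3 + u 3*v 2 + u 4*v 1 - u 5*v 0 := by
  show phi0 ![u, v, EuclideanSpace.single 6 1] = _
  simp only [phi0, Matrix.det_fin_three, Matrix.cons_val', Matrix.cons_val_zero, Matrix.cons_val_one,
    Matrix.head_cons, Matrix.empty_val', Matrix.cons_val_fin_one, Matrix.head_fin_const,
    Matrix.cons_val_two, Matrix.tail_cons, Matrix.of_apply]
  simp only [EuclideanSpace.single_apply, Fin.reduceEq, reduceIte]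
  ring

lemma chiA0 (u v w : V7) : chi u v w 0 = u 1*v 3*w 6 + u 1*v 4*w 5 - u 1*v 5*w 4 - u 1*v 6*w 3 + u 2*v 3*w 5 - u 2*v 4*w 6 - u 2*v 5*w 3 + u 2*v 6*w 4 - u 3*v 1*w 6 - u 3*v 2*w 5 + u 3*v 5*w 2 + u 3*v 6*w 1 - u 4*v 1*w 5 + u 4*v 2*w 6 + u 4*v 5*w 1 - u 4*v 6*w 2 + u 5*v 1*w 4 + u 5*v 2*w 3 - u 5*v 3*w 2 - u 5*v 4*w 1 + u 6*v 1*w 3 - u 6*v 2*w 4 - u 6*v 3*w 1 + u 6*v 4*w 2 := by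
  show starPhi0 ![u, v, w, EuclideanSpace.single 0 1] = _
  simp only [starPhi0, det4my, Matrix.cons_val', Matrix.cons_val_zero, Matrix.cons_val_one,
    Matrix.head_cons, Matrix.empty_val', Matrix.cons_val_fin_one, Matrix.head_fin_const,
    Matrix.cons_val_two, Matrix.cons_val_three, Matrix.tail_cons, Matrix.of_apply]
  simp only [EuclideanSpace.single_apply, Fin.reduceEq, reduceIte]
  ring

lemma chiA1 (u v w : V7) : chi u v w 1 = -u 0*v 3*w 6 - u 0*v 4*w 5 + u 0*v 5*w 4 + u 0*v 6*w 3 - u 2*v 3*w 4 + u 2*v 4*w 3 - u 2*v 5*w 6 + u 2*v 6*w 5 + u 3*v 0*w 6 + u 3*v 2*w 4 - u 3*v 4*w 2 - u 3*v 6*w 0 + u 4*v 0*w 5 - u 4*v 2*w 3 + u 4*v 3*w 2 - u 4*v 5*w 0 - u 5*v 0*w 4 + u 5*v 2*w 6 + u 5*v 4*w 0 - u 5*v 6*w 2 - u 6*v 0*w 3 - u 6*v 2*w 5 + u 6*v 3*w 0 + u 6*v 5*w 2 := by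
  show starPhi0 ![u, v, w, EuclideanSpace.single 1 1] = _
  simp only [starPhi0, det4my, Matrix.cons_val', Matrix.cons_val_zero, Matrix.cons_val_one,
    Matrix.head_cons, Matrix.empty_val', Matrix.cons_val_fin_one, Matrix.head_fin_const,
    Matrix.cons_val_two, Matrix.cons_val_three, Matrix.tail_cons, Matrix.of_apply]
  simp only [EuclideanSpace.single_apply, Fin.reduceEq, reduceIte]
  ring

lemma chiA2 (u v w : V7) : chi u v w 2 = -u 0*v 3*w 5 + u 0*v 4*w 6 + u 0*v 5*w 3 - u 0*v 6*w 4 + u 1*v 3*w 4 - u 1*v 4*w 3 + u 1*v 5*w 6 - u 1*v 6*w 5 + u 3*v 0*w 5 - u 3*v 1*w 4 + u 3*v 4*w 1 - u 3*v 5*w 0 - u 4*v 0*w 6 + u 4*v 1*w 3 - u 4*v 3*w 1 + u 4*v 6*w 0 - u 5*v 0*w 3 - u 5*v 1*w 6 + u 5*v 3*w 0 + u 5*v 6*w 1 + u 6*v 0*w 4 + u 6*v 1*w 5 - u 6*v 4*w 0 - u 6*v 5*w 1 := by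
  show starPhi0 ![u, v, w, EuclideanSpace.single 2 1] = _
  simp only [starPhi0, det4my, Matrix.cons_val', Matrix.cons_val_zero, Matrix.cons_val_one,
    Matrix.head_cons, Matrix.empty_val', Matrix.cons_val_fin_one, Matrix.head_fin_const,
    Matrix.cons_val_two, Matrix.cons_val_three, Matrix.tail_cons, Matrix.of_apply]
  simp only [EuclideanSpace.single_apply, Fin.reduceEq, reduceIte]
  ring

lemma chiA3 (u v w : V7) : chi u v w 3 = u 0*v 1*w 6 + u 0*v 2*w 5 - u 0*v 5*w 2 - u 0*v 6*w 1 - u 1*v 0*w 6 - u 1*v 2*w 4 + u 1*v 4*w 2 + u 1*v 6*w 0 - u 2*v 0*w 5 + u 2*v 1*w 4 - u 2*v 4*w 1 + u 2*v 5*w 0 - u 4*v 1*w 2 + u 4*v 2*w 1 - u 4*v 5*w 6 + u 4*v 6*w 5 + u 5*v 0*w 2 - u 5*v 2*w 0 + u 5*v 4*w 6 - u 5*v 6*w 4 + u 6*v 0*w 1 - u 6*v 1*w 0 - u 6*v 4*w 5 + u 6*v 5*w 4 := by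
  show starPhi0 ![u, v, w, EuclideanSpace.single 3 1] = _
  simp only [starPhi0, det4my, Matrix.cons_val', Matrix.cons_val_zero, Matrix.cons_val_one,
    Matrix.head_cons, Matrix.empty_val', Matrix.cons_val_fin_one, Matrix.head_fin_const,
    Matrix.cons_val_two, Matrix.cons_val_three, Matrix.tail_cons, Matrix.of_apply]
  simp only [EuclideanSpace.single_apply, Fin.reduceEq, reduceIte]
  ring

lemma chiA4 (u v w : V7) : chi u v w 4 = u 0*v 1*w 5 - u 0*v 2*w 6 - u 0*v 5*w 1 + u 0*v 6*w 2 - u 1*v 0*w 5 + u 1*v 2*w 3 - u 1*v 3*w 2 + u 1*v 5*w 0 + u 2*v 0*w 6 - u 2*v 1*w 3 + u 2*v 3*w 1 - u 2*v 6*w 0 + u 3*v 1*w 2 - u 3*v 2*w 1 + u 3*v 5*w 6 - u 3*v 6*w 5 + u 5*v 0*w 1 - u 5*v 1*w 0 - u 5*v 3*w 6 + u 5*v 6*w 3 - u 6*v 0*w 2 + u 6*v 2*w 0 + u 6*v 3*w 5 - u 6*v 5*w 3 := by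
  show starPhi0 ![u, v, w, EuclideanSpace.single 4 1] = _
  simp only [starPhi0, det4my, Matrix.cons_val', Matrix.cons_val_zero, Matrix.cons_val_one,
    Matrix.head_cons, Matrix.empty_val', Matrix.cons_val_fin_one, Matrix.head_fin_const,
    Matrix.cons_val_two, Matrix.cons_val_three, Matrix.tail_cons, Matrix.of_apply]
  simp only [EuclideanSpace.single_apply, Fin.reduceEq, reduceIte]
  ring

lemma chiA5 (u v w : V7) : chi u v w 5 = -u 0*v 1*w 4 - u 0*v 2*w 3 + u 0*v 3*w 2 + u 0*v 4*w 1 + u 1*v 0*w 4 - u 1*v 2*w 6 - u 1*v 4*w 0 + u 1*v 6*w 2 + u 2*v 0*w 3 + u 2*v 1*w 6 - u 2*v 3*w 0 - u 2*v 6*w 1 - u 3*v 0*w 2 + u 3*v 2*w 0 - u 3*v 4*w 6 + u 3*v 6*w 4 - u 4*v 0*w 1 + u 4*v 1*w 0 + u 4*v 3*w 6 - u 4*v 6*w 3 - u 6*v 1*w 2 + u 6*v 2*w 1 - u 6*v 3*w 4 + u 6*v 4*w 3 := by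
  show starPhi0 ![u, v, w, EuclideanSpace.single 5 1] = _
  simp only [starPhi0, det4my, Matrix.cons_val', Matrix.cons_val_zero, Matrix.cons_val_one,
    Matrix.head_cons, Matrix.empty_val', Matrix.cons_val_fin_one, Matrix.head_fin_const,
    Matrix.cons_val_two, Matrix.cons_val_three, Matrix.tail_cons, Matrix.of_apply]
  simp only [EuclideanSpace.single_apply, Fin.reduceEq, reduceIte]
  ring

lemma chiA6 (u v w : V7) : chi u v w 6 = -u 0*v 1*w 3 + u 0*v 2*w 4 + u 0*v 3*w 1 - u 0*v 4*w 2 + u 1*v 0*w 3 + u 1*v 2*w 5 - u 1*v 3*w 0 - u 1*v 5*w 2 - u 2*v 0*w 4 - u 2*v 1*w 5 + u 2*v 4*w 0 + u 2*v 5*w 1 - u 3*v 0*w 1 + u 3*v 1*w 0 + u 3*v 4*w 5 - u 3*v 5*w 4 + u 4*v 0*w 2 - u 4*v 2*w 0 - u 4*v 3*w 5 + u 4*v 5*w 3 + u 5*v 1*w 2 - u 5*v 2*w 1 + u 5*v 3*w 4 - u 5*v 4*w 3 := by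
  show starPhi0 ![u, v, w, EuclideanSpace.single 6 1] = _
  simp only [starPhi0, det4my, Matrix.cons_val', Matrix.cons_val_zero, Matrix.cons_val_one,
    Matrix.head_cons, Matrix.empty_val', Matrix.cons_val_fin_one, Matrix.head_fin_const,
    Matrix.cons_val_two, Matrix.cons_val_three, Matrix.tail_cons, Matrix.of_apply]
  simp only [EuclideanSpace.single_apply, Fin.reduceEq, reduceIte]
  ring


lemma V7ext {x y : V7} (h0 : x 0 = y 0) (h1 : x 1 = y 1) (h2 : x 2 = y 2) (h3 : x 3 = y 3)
    (h4 : x 4 = y 4) (h5 : x 5 = y 5) (h6 : x 6 = y 6) : x = y := by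
  ext i
  fin_cases i <;> assumption

lemma inner_cross_left (a b : V7) : ⟪cross a b, a⟫ = 0 := by
  simp only [inner7, crossA0, crossA1, crossA2, crossA3, crossA4, crossA5, crossA6]; ring

lemma cross_cyclic (a b c : V7) : ⟪cross a b, c⟫ = ⟪cross b c, a⟫ := by
  simp only [inner7, crossA0, crossA1, crossA2, crossA3, crossA4, crossA5, crossA6]; ring

lemma cross_antisymm (a b : V7) : cross a b = - cross b a := by
  refine V7ext ?_ ?_ ?_ ?_ ?_ ?_ ?_ <;> · simp only [crossA0, crossA1, crossA2, crossA3, crossA4, crossA5, crossA6, PiLp.neg_apply]; ring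

lemma inner_cross_cross (t a b : V7) : ⟪cross t a, cross t b⟫ = ⟪t,t⟫*⟪a,b⟫ - ⟪t,a⟫*⟪t,b⟫ := by
  simp only [inner7, crossA0, crossA1, crossA2, crossA3, crossA4, crossA5, crossA6]; ring

lemma cross_cross_self (t w : V7) : cross t (cross t w) = ⟪t,w⟫ • t - ⟪t,t⟫ • w := by
  refine V7ext ?_ ?_ ?_ ?_ ?_ ?_ ?_ <;> · simp only [inner7, crossA0, crossA1, crossA2, crossA3, crossA4, crossA5, crossA6, PiLp.smul_apply, PiLp.sub_apply, PiLp.add_apply, PiLp.neg_apply, smul_eq_mul]; ring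

lemma cross_jacobiish (a b w : V7) :
    cross a (cross b w) + cross b (cross a w) = ⟪a,w⟫ • b + ⟪b,w⟫ • a - (2*⟪a,b⟫) • w := by
  refine V7ext ?_ ?_ ?_ ?_ ?_ ?_ ?_ <;> · simp only [inner7, crossA0, crossA1, crossA2, crossA3, crossA4, crossA5, crossA6, PiLp.smul_apply, PiLp.sub_apply, PiLp.add_apply, PiLp.neg_apply, smul_eq_mul]; ring

lemma cross_smul_right (t : V7) (r : ℝ) (x : V7) : cross t (r • x) = r • cross t x := by
  refine V7ext ?_ ?_ ?_ ?_ ?_ ?_ ?_ <;> · simp only [crossA0, crossA1, crossA2, crossA3, crossA4, crossA5, crossA6, PiLp.smul_apply, PiLp.sub_apply, PiLp.add_apply, PiLp.neg_apply, smul_eq_mul]; ring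

lemma cross_sub_right (t x y : V7) : cross t (x - y) = cross t x - cross t y := by
  refine V7ext ?_ ?_ ?_ ?_ ?_ ?_ ?_ <;> · simp only [crossA0, crossA1, crossA2, crossA3, crossA4, crossA5, crossA6, PiLp.smul_apply, PiLp.sub_apply, PiLp.add_apply, PiLp.neg_apply, smul_eq_mul]; ring

lemma cross_neg_right (t x : V7) : cross t (-x) = - cross t x := by
  refine V7ext ?_ ?_ ?_ ?_ ?_ ?_ ?_ <;> · simp only [crossA0, crossA1, crossA2, crossA3, crossA4, crossA5, crossA6, PiLp.smul_apply, PiLp.sub_apply, PiLp.add_apply, PiLp.neg_apply, smul_eq_mul]; ring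

lemma chi_eq (a b w : V7) : chi a b w = ⟪a,w⟫ • b - ⟪a,b⟫ • w - cross a (cross b w) := by
  refine V7ext ?_ ?_ ?_ ?_ ?_ ?_ ?_ <;> · simp only [inner7, crossA0, crossA1, crossA2, crossA3, crossA4, crossA5, crossA6, chiA0, chiA1, chiA2, chiA3, chiA4, chiA5, chiA6, PiLp.smul_apply, PiLp.sub_apply, PiLp.add_apply, PiLp.neg_apply, smul_eq_mul]; ring

lemma inner_chi_first (a b w : V7) : ⟪a, chi a b w⟫ = 0 := by
  simp only [inner7, chiA0, chiA1, chiA2, chiA3, chiA4, chiA5, chiA6]; ring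

lemma inner_chi_second (a b w : V7) : ⟪b, chi a b w⟫ = 0 := by
  simp only [inner7, chiA0, chiA1, chiA2, chiA3, chiA4, chiA5, chiA6]; ring

/-- for orthonormal u,v and L = span{u,v,u×v}, the map
j(X) = χ(u,v,X) preserves L^⊥, squares to −1 on L^⊥ and is orthogonal there:
an orthogonal complex structure on L^⊥. -/
theorem chi_complex_structure (u v : V7) (h : Orthonormal ℝ ![u, v])
    (L : Submodule ℝ V7) (hL : L = Submodule.span ℝ {u, v, cross u v}) :
    (∀ X ∈ Lᗮ, chi u v X ∈ Lᗮ) ∧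
    (∀ X ∈ Lᗮ, chi u v (chi u v X) = -X) ∧
    (∀ X ∈ Lᗮ, ∀ Y ∈ Lᗮ, ⟪chi u v X, chi u v Y⟫ = ⟪X, Y⟫) := by
  subst hL
  have huu : ⟪u,u⟫ = 1 := by
    have h0 := h.1 0
    simp only [Matrix.cons_val_zero] at h0
    rw [real_inner_self_eq_norm_mul_norm, h0]; norm_num
  have hvv : ⟪v,v⟫ = 1 := by
    have h0 := h.1 1
    simp only [Matrix.cons_val_one, Matrix.head_cons, Matrix.cons_val_zero] at h0
    rw [real_inner_self_eq_norm_mul_norm, h0]; norm_num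
  have huv : ⟪u,v⟫ = 0 := by
    have h0 := h.2 (show (0:Fin 2) ≠ 1 by decide)
    simpa using h0
  have hmem : ∀ X : V7, X ∈ (Submodule.span ℝ {u, v, cross u v})ᗮ ↔
      (⟪u,X⟫ = 0 ∧ ⟪v,X⟫ = 0 ∧ ⟪cross u v,X⟫ = 0) := by
    intro X
    constructor
    · intro hX
      have h' := (Submodule.mem_orthogonal _ X).mp hX
      exact ⟨h' u (Submodule.subset_span (by simp)),
             h' v (Submodule.subset_span (by simp)),
             h' _ (Submodule.subset_span (by simp))⟩
    · rintro ⟨h1, h2, h3⟩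
      rw [Submodule.mem_orthogonal]
      intro y hy
      induction hy using Submodule.span_induction with
      | mem z hz =>
          simp only [Set.mem_insert_iff, Set.mem_singleton_iff] at hz
          rcases hz with rfl | rfl | rfl
          exacts [h1, h2, h3]
      | zero => simp
      | add x y hx hy ihx ihy => rw [inner_add_left, ihx, ihy]; ring
      | smul a x hx ihx => rw [real_inner_smul_left, ihx]; ring
  have key : ∀ X : V7, ⟪u,X⟫ = 0 → chi u v X = - cross u (cross v X) := by
    intro X h1
    rw [chi_eq, h1, huv]
    simp
  have hcvX : ∀ X : V7, ⟪cross u v, X⟫ = 0 → ⟪u, cross v X⟫ = 0 := by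
    intro X h3
    rw [real_inner_comm, ← cross_cyclic]
    exact h3
  have orthJ : ∀ X : V7, ⟪u,X⟫=0 → ⟪v,X⟫=0 → ⟪cross u v,X⟫=0 →
      (⟪u, chi u v X⟫ = 0 ∧ ⟪v, chi u v X⟫ = 0 ∧ ⟪cross u v, chi u v X⟫ = 0) := by
    intro X h1 h2 h3
    refine ⟨inner_chi_first u v X, inner_chi_second u v X, ?_⟩
    rw [key X h1, inner_neg_right, inner_cross_cross]
    have hv0 : ⟪v, cross v X⟫ = 0 := by rw [real_inner_comm]; exact inner_cross_left v X
    rw [hv0, huv]; ring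
  have sq : ∀ X : V7, ⟪u,X⟫=0 → ⟪v,X⟫=0 → ⟪cross u v,X⟫=0 →
      cross u (cross v (cross u (cross v X))) = -X := by
    intro X h1 h2 h3
    have hXu : ⟪X,u⟫ = 0 := by rw [real_inner_comm]; exact h1
    have hua : ⟪u, cross v X⟫ = 0 := hcvX X h3
    have huua : ⟪u, cross u (cross v X)⟫ = 0 := by
      rw [real_inner_comm]; exact inner_cross_left u _
    have hvua : ⟪v, cross u (cross v X)⟫ = 0 := by
      rw [real_inner_comm, cross_cyclic, cross_antisymm (cross v X) v, inner_neg_left,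
        cross_cross_self]
      rw [inner_sub_left, real_inner_smul_left, real_inner_smul_left, h2, hXu]; ring
    have e2 := cross_jacobiish u v (cross u (cross v X))
    rw [huua, hvua, huv, cross_cross_self u (cross v X), hua, huu] at e2
    rw [cross_sub_right, cross_smul_right, cross_smul_right, cross_cross_self v X, h2, hvv] at e2
    simp only [zero_smul, one_smul, mul_zero, smul_zero, zero_sub, sub_zero, zero_add, add_zero,
      cross_neg_right, neg_neg, neg_sub] at e2
    exact eq_neg_of_add_eq_zero_left e2
  refine ⟨?_, ?_, ?_⟩
  · intro X hX
    obtain ⟨h1, h2, h3⟩ := (hmem X).mp hX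
    exact (hmem _).mpr (orthJ X h1 h2 h3)
  · intro X hX
    obtain ⟨h1, h2, h3⟩ := (hmem X).mp hX
    obtain ⟨j1, j2, j3⟩ := orthJ X h1 h2 h3
    rw [key _ j1, key X h1, cross_neg_right, cross_neg_right, neg_neg]
    exact sq X h1 h2 h3
  · intro X hX Y hY
    obtain ⟨h1, h2, h3⟩ := (hmem X).mp hX
    obtain ⟨g1, g2, g3⟩ := (hmem Y).mp hY
    rw [key X h1, key Y g1, inner_neg_neg, inner_cross_cross, inner_cross_cross,
      huu, hvv, h2, g2, hcvX X h3, hcvX Y g3]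
    ring

end
end

section
/- For all vectors u, v, ξ in ℝ⁷: φ₀(u×ξ, v, ξ) = ‖ξ‖²⟨u,v⟩ − ⟨ξ,u⟩⟨ξ,v⟩. In particular, if ξ is a unit vector and u, v are orthogonal to ξ, then the 2-form ω_ξ = ξ⌟φ₀ and the map J_ξ(u) = u×ξ satisfy ω_ξ(J_ξ(u), v) = ⟨u,v⟩. -/
open scoped RealInnerProductSpace

noncomputable section
set_option maxHeartbeats 2000000

lemma cross0 (u v : V7) : cross u v 0 =
    (u 1*v 2 - u 2*v 1) + (u 3*v 4 - u 4*v 3) + (u 5*v 6 - u 6*v 5) := by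
  simp [cross, phi0, Matrix.det_fin_three, EuclideanSpace.single_apply]
  try ring
lemma cross1 (u v : V7) : cross u v 1 =
    (u 2*v 0 - u 0*v 2) + (u 3*v 5 - u 5*v 3) - (u 4*v 6 - u 6*v 4) := by
  simp [cross, phi0, Matrix.det_fin_three, EuclideanSpace.single_apply]
  try ring
lemma cross2 (u v : V7) : cross u v 2 =
    (u 0*v 1 - u 1*v 0) - (u 3*v 6 - u 6*v 3) - (u 4*v 5 - u 5*v 4) := by
  simp [cross, phi0, Matrix.det_fin_three, EuclideanSpace.single_apply]
  try ring
lemma cross3 (u v : V7) : cross u v 3 =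
    (u 4*v 0 - u 0*v 4) + (u 5*v 1 - u 1*v 5) - (u 6*v 2 - u 2*v 6) := by
  simp [cross, phi0, Matrix.det_fin_three, EuclideanSpace.single_apply]
  try ring
lemma cross4 (u v : V7) : cross u v 4 =
    (u 0*v 3 - u 3*v 0) - (u 6*v 1 - u 1*v 6) - (u 5*v 2 - u 2*v 5) := by
  simp [cross, phi0, Matrix.det_fin_three, EuclideanSpace.single_apply]
  try ring
lemma cross5 (u v : V7) : cross u v 5 =
    (u 6*v 0 - u 0*v 6) + (u 1*v 3 - u 3*v 1) - (u 2*v 4 - u 4*v 2) := by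
  simp [cross, phi0, Matrix.det_fin_three, EuclideanSpace.single_apply]
  try ring
lemma cross6 (u v : V7) : cross u v 6 =
    (u 0*v 5 - u 5*v 0) - (u 1*v 4 - u 4*v 1) - (u 2*v 3 - u 3*v 2) := by
  simp [cross, phi0, Matrix.det_fin_three, EuclideanSpace.single_apply]
  try ring

lemma key (u v ξ : V7) : phi0 ![cross u ξ, v, ξ] = ‖ξ‖ ^ 2 * ⟪u, v⟫ - ⟪ξ, u⟫ * ⟪ξ, v⟫ := by
  rw [← real_inner_self_eq_norm_sq]
  simp only [phi0, Matrix.det_fin_three, Matrix.of_apply, Matrix.cons_val', Matrix.cons_val_zero,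
    Matrix.cons_val_one, Matrix.head_cons, Matrix.empty_val', Matrix.cons_val_fin_one,
    Matrix.head_fin_const, Matrix.cons_val_two, Matrix.tail_cons]
  simp only [cross0, cross1, cross2, cross3, cross4, cross5, cross6,
    PiLp.inner_apply, RCLike.inner_apply, starRingEnd_apply, star_trivial, Fin.sum_univ_seven]
  ring

lemma phi0_cyc (a b c : V7) : phi0 ![c, a, b] = phi0 ![a, b, c] := by
  simp [phi0, Matrix.det_fin_three]; ring


/-- φ₀(u×ξ, v, ξ) = ‖ξ‖²⟨u,v⟩ − ⟨ξ,u⟩⟨ξ,v⟩; in particular, for a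
unit vector ξ and u,v ⟂ ξ, the 2-form ω_ξ = ξ⌟φ₀ and J_ξ(u) = u×ξ satisfy
ω_ξ(J_ξ(u), v) = ⟨u,v⟩. -/
theorem phi0_cross_contract :
    (∀ u v ξ : V7, phi0 ![cross u ξ, v, ξ] = ‖ξ‖ ^ 2 * ⟪u, v⟫ - ⟪ξ, u⟫ * ⟪ξ, v⟫) ∧
    (∀ ξ u v : V7, ‖ξ‖ = 1 → ⟪ξ, u⟫ = 0 → ⟪ξ, v⟫ = 0 →
      iprod ξ phi0 ![cross u ξ, v] = ⟪u, v⟫) := by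
  refine ⟨key, fun ξ u v h1 h2 h3 => ?_⟩
  have h : iprod ξ phi0 ![cross u ξ, v] = phi0 ![ξ, cross u ξ, v] := rfl
  rw [h, phi0_cyc, key, h1, h2, h3]; ring

end
end

section
/- For orthonormal vectors α, β in ℝ⁷, the 3-form identity α⌟(β⌟(β^#∧∗φ₀)) = α⌟∗φ₀ + (α⌟(β⌟∗φ₀)) ∧ β^# holds. (With Im Ω_α = α⌟∗φ₀, ⋆ω_β = β⌟(β^#∧∗φ₀), and Im Ω_β = β⌟∗φ₀, this says Im Ω_α = α⌟(⋆ω_β) − (α⌟Im Ω_β)∧β^# up to the sign conventions of wedge with a 1-form.) -/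
open scoped RealInnerProductSpace

noncomputable section

/-! ### Auxiliary lemmas -/

lemma m_as_of (w : Fin 4 → V7) (i j k l : Fin 7) :
    !![w 0 i, w 0 j, w 0 k, w 0 l; w 1 i, w 1 j, w 1 k, w 1 l;
       w 2 i, w 2 j, w 2 k, w 2 l; w 3 i, w 3 j, w 3 k, w 3 l]
      = Matrix.of (fun r c => w r (![i,j,k,l] c)) := by
  ext r c; fin_cases r <;> fin_cases c <;> rfl

lemma starPhi0_eq (w : Fin 4 → V7) :
    starPhi0 w = (Matrix.of fun r c => w r (![3,4,5,6] c)).det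
      + (Matrix.of fun r c => w r (![1,2,5,6] c)).det
      + (Matrix.of fun r c => w r (![1,2,3,4] c)).det
      + (Matrix.of fun r c => w r (![0,2,4,6] c)).det
      - (Matrix.of fun r c => w r (![0,2,3,5] c)).det
      - (Matrix.of fun r c => w r (![0,1,4,5] c)).det
      - (Matrix.of fun r c => w r (![0,1,3,6] c)).det := by
  simp only [starPhi0, m_as_of]

lemma starPhi0_perm (σ : Equiv.Perm (Fin 4)) (v : Fin 4 → V7) :
    starPhi0 (fun r => v (σ r)) = ((Equiv.Perm.sign σ : ℤ) : ℝ) * starPhi0 v := by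
  have key : ∀ g : Fin 4 → Fin 7,
      (Matrix.of fun r c => v (σ r) (g c)).det
        = ((Equiv.Perm.sign σ : ℤ) : ℝ) * (Matrix.of fun r c => v r (g c)).det := by
    intro g
    have := Matrix.det_permute σ (Matrix.of fun r c => v r (g c))
    simp at this
    exact this
  rw [starPhi0_eq, starPhi0_eq]
  simp only [key]
  ring

lemma starPhi0_swap01 (a b c d : V7) : starPhi0 ![b, a, c, d] = - starPhi0 ![a, b, c, d] := by
  have h := starPhi0_perm (Equiv.swap 0 1) ![a, b, c, d]
  have harg : (fun r => ![a, b, c, d] ((Equiv.swap 0 1) r)) = ![b, a, c, d] := by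
    funext r; fin_cases r <;> simp [Equiv.swap_apply_def]
  rw [harg, Equiv.Perm.sign_swap (by decide)] at h
  rw [h]; norm_num

lemma starPhi0_swap23 (a b c d : V7) : starPhi0 ![a, b, d, c] = - starPhi0 ![a, b, c, d] := by
  have h := starPhi0_perm (Equiv.swap 2 3) ![a, b, c, d]
  have harg : (fun r => ![a, b, c, d] ((Equiv.swap 2 3) r)) = ![a, b, d, c] := by
    funext r; fin_cases r <;> simp [Equiv.swap_apply_def]
  rw [harg, Equiv.Perm.sign_swap (by decide)] at h
  rw [h]; norm_num

lemma starPhi0_cycle3 (a b c d : V7) : starPhi0 ![b, c, a, d] = starPhi0 ![a, b, c, d] := by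
  have h := starPhi0_perm (Equiv.swap 0 1 * Equiv.swap 1 2) ![a, b, c, d]
  have harg : (fun r => ![a, b, c, d] ((Equiv.swap 0 1 * Equiv.swap 1 2 : Equiv.Perm (Fin 4)) r)) = ![b, c, a, d] := by
    funext r; fin_cases r <;> rfl
  rw [harg] at h
  rw [h, map_mul, Equiv.Perm.sign_swap (by decide), Equiv.Perm.sign_swap (by decide)]
  norm_num

lemma starPhi0_cycle4 (a b c d : V7) : starPhi0 ![b, c, d, a] = - starPhi0 ![a, b, c, d] := by
  have h := starPhi0_perm (Equiv.swap 0 1 * Equiv.swap 1 2 * Equiv.swap 2 3) ![a, b, c, d]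
  have harg : (fun r => ![a, b, c, d] ((Equiv.swap 0 1 * Equiv.swap 1 2 * Equiv.swap 2 3 : Equiv.Perm (Fin 4)) r))
      = ![b, c, d, a] := by
    funext r; fin_cases r <;> rfl
  rw [harg] at h
  rw [h, map_mul, map_mul, Equiv.Perm.sign_swap (by decide), Equiv.Perm.sign_swap (by decide),
    Equiv.Perm.sign_swap (by decide)]
  norm_num

lemma wedge14 (ξ : V7) (v : Fin 5 → V7) :
    wedge (p := 1) (q := 4) (dualCov ξ) starPhi0 v
      = ∑ p : Fin 5, (if p = 0 then (1:ℝ) else -1) * ⟪ξ, v p⟫ *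
          starPhi0 (fun j => v (Equiv.swap 0 p j.succ)) := by
  have hsucc : ∀ j : Fin 4, Fin.natAdd 1 j = j.succ := by decide
  rw [wedge, ← Equiv.sum_comp (Equiv.Perm.decomposeFin (n := 4)).symm, Fintype.sum_prod_type]
  have hterm : ∀ (p : Fin 5) (e : Equiv.Perm (Fin 4)),
      ((Equiv.Perm.sign (Equiv.Perm.decomposeFin.symm (p, e)) : ℤ) : ℝ) *
        dualCov ξ (fun i => v (Equiv.Perm.decomposeFin.symm (p, e) (Fin.castAdd 4 i))) *
        starPhi0 (fun j => v (Equiv.Perm.decomposeFin.symm (p, e) (Fin.natAdd 1 j)))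
      = (if p = 0 then (1:ℝ) else -1) * ⟪ξ, v p⟫ *
          starPhi0 (fun j => v (Equiv.swap 0 p j.succ)) := by
    intro p e
    have h1 : (fun j : Fin 4 => v (Equiv.Perm.decomposeFin.symm (p, e) (Fin.natAdd 1 j)))
        = fun j => (fun j' : Fin 4 => v (Equiv.swap 0 p j'.succ)) (e j) := by
      funext j
      rw [hsucc, Equiv.Perm.decomposeFin_symm_apply_succ]
    have h0 : (fun i : Fin 1 => v (Equiv.Perm.decomposeFin.symm (p, e) (Fin.castAdd 4 i)))
        = fun _ => v p := by
      funext i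
      rw [Fin.eq_zero i]
      show v (Equiv.Perm.decomposeFin.symm (p, e) 0) = v p
      rw [Equiv.Perm.decomposeFin_symm_apply_zero]
    rw [h1, starPhi0_perm e (fun j' => v (Equiv.swap 0 p j'.succ)),
      Equiv.Perm.decomposeFin.symm_sign, h0]
    rcases Int.units_eq_one_or (Equiv.Perm.sign e) with hs | hs <;> rw [hs] <;>
      by_cases hp : p = 0 <;> simp [hp, dualCov] <;> ring
  simp only [hterm, Finset.sum_const, Finset.card_univ, Fintype.card_perm, Fintype.card_fin,
    nsmul_eq_mul, Finset.mul_sum]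
  refine Finset.sum_congr rfl fun p _ => ?_
  norm_num [Nat.factorial]
  split_ifs <;> ring

lemma perm2_sum (f : Equiv.Perm (Fin 2) → ℝ) :
    ∑ e : Equiv.Perm (Fin 2), f e = f 1 + f (Equiv.swap 0 1) := by
  rw [← Equiv.sum_comp (Equiv.Perm.decomposeFin (n := 1)).symm, Fintype.sum_prod_type]
  simp only [Fintype.sum_unique]
  rw [Fin.sum_univ_two]
  have : (default : Equiv.Perm (Fin 1)) = 1 := rfl
  rw [this, Equiv.Perm.decomposeFin_symm_of_one, Equiv.Perm.decomposeFin_symm_of_one,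
    Equiv.swap_self]
  rfl

lemma wedge21 (τ : (Fin 2 → V7) → ℝ)
    (hτ : ∀ a b : V7, τ ![b, a] = - τ ![a, b]) (ξ : V7) (v : Fin 3 → V7) :
    wedge (p := 2) (q := 1) τ (dualCov ξ) v
      = τ ![v 0, v 1] * ⟪ξ, v 2⟫ - τ ![v 0, v 2] * ⟪ξ, v 1⟫ + τ ![v 1, v 2] * ⟪ξ, v 0⟫ := by
  have harg : ∀ σ : Equiv.Perm (Fin 3),
      (fun i : Fin 2 => v (σ (Fin.castAdd 1 i))) = ![v (σ 0), v (σ 1)] := by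
    intro σ; funext i; fin_cases i <;> rfl
  have hβ : ∀ σ : Equiv.Perm (Fin 3),
      dualCov ξ (fun j : Fin 1 => v (σ (Fin.natAdd 2 j))) = ⟪ξ, v (σ 2)⟫ := by
    intro σ; rfl
  rw [wedge]
  simp only [harg, hβ]
  rw [← Equiv.sum_comp (Equiv.Perm.decomposeFin (n := 2)).symm, Fintype.sum_prod_type]
  have h2 : ∀ (p : Fin 3) (e : Equiv.Perm (Fin 2)),
      Equiv.Perm.decomposeFin.symm (p, e) 2 = Equiv.swap 0 p ((e 1).succ) := by
    intro p e
    rw [show (2 : Fin 3) = (1 : Fin 2).succ from rfl, Equiv.Perm.decomposeFin_symm_apply_succ]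
  simp only [perm2_sum, Fin.sum_univ_three, Equiv.Perm.decomposeFin.symm_sign,
    Equiv.Perm.decomposeFin_symm_apply_zero, Equiv.Perm.decomposeFin_symm_apply_one, h2]
  norm_num [Equiv.swap_apply_def, Equiv.Perm.sign_swap]
  simp only [Fin.reduceEq, reduceIte, Units.val_neg, Units.val_one, Int.cast_neg, Int.cast_one]
  rw [hτ (v 0) (v 1), hτ (v 0) (v 2), hτ (v 1) (v 2)]
  ring

/-- for orthonormal α, β,
α⌟(β⌟(β^#∧∗φ₀)) = α⌟∗φ₀ + (α⌟(β⌟∗φ₀)) ∧ β^#. -/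
theorem imOmega_duality (α β : V7) (h : Orthonormal ℝ ![α, β]) :
    iprod (k := 3) α (iprod (k := 4) β (wedge (p := 1) (q := 4) (dualCov β) starPhi0)) =
      fun v => iprod α starPhi0 v +
        wedge (p := 2) (q := 1) (iprod α (iprod β starPhi0)) (dualCov β) v := by
  rw [orthonormal_iff_ite] at h
  have hββ : ⟪β, β⟫ = (1:ℝ) := by simpa using h 1 1
  have hβα : ⟪β, α⟫ = (0:ℝ) := by simpa using h 1 0
  funext v
  simp only [iprod]
  have hw : Fin.cons β (Fin.cons α v) = ![β, α, v 0, v 1, v 2] := by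
    funext i; fin_cases i <;> rfl
  have hv : Fin.cons α v = ![α, v 0, v 1, v 2] := by
    funext i; fin_cases i <;> rfl
  rw [hw, hv, wedge14 β ![β, α, v 0, v 1, v 2]]
  -- τ facts
  have hτ : ∀ u : Fin 2 → V7,
      starPhi0 (Fin.cons β (Fin.cons α u)) = starPhi0 ![β, α, u 0, u 1] := by
    intro u
    have : Fin.cons β (Fin.cons α u) = ![β, α, u 0, u 1] := by
      funext i; fin_cases i <;> rfl
    rw [this]
  have hτalt : ∀ a b : V7,
      (fun u : Fin 2 → V7 => starPhi0 (Fin.cons β (Fin.cons α u))) ![b, a]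
        = - (fun u : Fin 2 → V7 => starPhi0 (Fin.cons β (Fin.cons α u))) ![a, b] := by
    intro a b
    simp only [hτ]
    have e1 : (![b, a] : Fin 2 → V7) 0 = b := rfl
    have e2 : (![b, a] : Fin 2 → V7) 1 = a := rfl
    have e3 : (![a, b] : Fin 2 → V7) 0 = a := rfl
    have e4 : (![a, b] : Fin 2 → V7) 1 = b := rfl
    rw [e1, e2, e3, e4, starPhi0_swap23]
  rw [wedge21 _ hτalt β v]
  simp only [iprod, hτ, Matrix.cons_val_zero, Matrix.cons_val_one, Matrix.head_cons]
  rw [Fin.sum_univ_five]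
  -- evaluate the five contraction patterns
  have A0 : (fun j : Fin 4 => (![β, α, v 0, v 1, v 2]) (Equiv.swap 0 0 j.succ))
      = ![α, v 0, v 1, v 2] := by
    funext j; fin_cases j <;> rfl
  have A1 : (fun j : Fin 4 => (![β, α, v 0, v 1, v 2]) (Equiv.swap 0 1 j.succ))
      = ![β, v 0, v 1, v 2] := by
    funext j; fin_cases j <;> rfl
  have A2 : (fun j : Fin 4 => (![β, α, v 0, v 1, v 2]) (Equiv.swap 0 2 j.succ))
      = ![α, β, v 1, v 2] := by
    funext j; fin_cases j <;> rfl
  have A3 : (fun j : Fin 4 => (![β, α, v 0, v 1, v 2]) (Equiv.swap 0 3 j.succ))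
      = ![α, v 0, β, v 2] := by
    funext j; fin_cases j <;> rfl
  have A4 : (fun j : Fin 4 => (![β, α, v 0, v 1, v 2]) (Equiv.swap 0 4 j.succ))
      = ![α, v 0, v 1, β] := by
    funext j; fin_cases j <;> rfl
  rw [A0, A1, A2, A3, A4]
  have B0 : (![β, α, v 0, v 1, v 2] : Fin 5 → V7) 0 = β := rfl
  have B1 : (![β, α, v 0, v 1, v 2] : Fin 5 → V7) 1 = α := rfl
  have B2 : (![β, α, v 0, v 1, v 2] : Fin 5 → V7) 2 = v 0 := rfl
  have B3 : (![β, α, v 0, v 1, v 2] : Fin 5 → V7) 3 = v 1 := rfl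
  have B4 : (![β, α, v 0, v 1, v 2] : Fin 5 → V7) 4 = v 2 := rfl
  rw [B0, B1, B2, B3, B4]
  -- reorder the starPhi0 arguments
  have C2 : starPhi0 ![α, β, v 1, v 2] = - starPhi0 ![β, α, v 1, v 2] :=
    starPhi0_swap01 β α (v 1) (v 2)
  have C3 : starPhi0 ![α, v 0, β, v 2] = starPhi0 ![β, α, v 0, v 2] :=
    starPhi0_cycle3 β α (v 0) (v 2)
  have C4 : starPhi0 ![α, v 0, v 1, β] = - starPhi0 ![β, α, v 0, v 1] :=
    starPhi0_cycle4 β α (v 0) (v 1)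
  rw [C2, C3, C4]
  norm_num [hββ, hβα]
  simp only [Fin.reduceEq, reduceIte]
  rw [← real_inner_self_eq_norm_sq, hββ]
  ring


end
end

section
/- Let (u,v,w) be a G₂-frame in ℝ⁷ (orthonormal with φ₀(u,v,w)=0) and R = χ(u,v,w). Then R×u = −(v×w), R×v = −(w×u), R×w = −(u×v); consequently for all real a,b,c, R×(au+bv+cw) = −a(v×w) − b(w×u) − c(u×v), and R×R″ = −R′. -/
open scoped RealInnerProductSpace

noncomputable section

set_option maxHeartbeats 1000000 in
private theorem det_fin_four' (M : Matrix (Fin 4) (Fin 4) ℝ) : M.det = M 0 0*M 1 1*M 2 2*M 3 3 - M 0 0*M 1 1*M 2 3*M 3 2 - M 0 0*M 1 2*M 2 1*M 3 3 + M 0 0*M 1 2*M 2 3*M 3 1 + M 0 0*M 1 3*M 2 1*M 3 2 - M 0 0*M 1 3*M 2 2*M 3 1 - M 0 1*M 1 0*M 2 2*M 3 3 + M 0 1*M 1 0*M 2 3*M 3 2 + M 0 1*M 1 2*M 2 0*M 3 3 - M 0 1*M 1 2*M 2 3*M 3 0 - M 0 1*M 1 3*M 2 0*M 3 2 + M 0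 1*M 1 3*M 2 2*M 3 0 + M 0 2*M 1 0*M 2 1*M 3 3 - M 0 2*M 1 0*M 2 3*M 3 1 - M 0 2*M 1 1*M 2 0*M 3 3 + M 0 2*M 1 1*M 2 3*M 3 0 + M 0 2*M 1 3*M 2 0*M 3 1 - M 0 2*M 1 3*M 2 1*M 3 0 - M 0 3*M 1 0*M 2 1*M 3 2 + M 0 3*M 1 0*M 2 2*M 3 1 + M 0 3*M 1 1*M 2 0*M 3 2 - M 0 3*M 1 1*M 2 2*M 3 0 - M 0 3*M 1 2*M 2 0*M 3 1 + M 0 3*M 1 2*M 2 1*M 3 0 := by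
  rw [Matrix.det_succ_row_zero]
  simp [Fin.sum_univ_succ, Matrix.det_fin_three, Fin.succAbove, show (Fin.succ 2 : Fin 4) = 3 from rfl, show (Fin.castSucc 2 : Fin 4) = 2 from rfl, show ((1:Fin 4) < Fin.succ 2) from by decide]
  ring

set_option maxHeartbeats 1000000 in
private theorem cross_comb (x y z t : V7) (a b c : ℝ) (i : Fin 7) :
    cross x (a • y + b • z + c • t) i = a * cross x y i + b * cross x z i + c * cross x t i := by
  fin_cases i <;>
    simp [cross, phi0, Matrix.det_fin_three, EuclideanSpace.single_apply, PiLp.add_apply,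
      PiLp.smul_apply, smul_eq_mul] <;>
  ring

set_option maxHeartbeats 0 in
/-- for a G₂-frame (u,v,w) and R = χ(u,v,w):
R×u = −(v×w), R×v = −(w×u), R×w = −(u×v); hence
R×(au+bv+cw) = −a(v×w)−b(w×u)−c(u×v) and R×R″ = −R′. -/
theorem cross_R (u v w : V7) (h : Orthonormal ℝ ![u, v, w])
    (hφ : phi0 ![u, v, w] = 0) (R R' R'' : V7) (hR : R = chi u v w)
    (hR' : R' = (Real.sqrt 3)⁻¹ • (cross u v + cross v w + cross w u))
    (hR'' : R'' = (Real.sqrt 3)⁻¹ • (u + v + w)) :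
    cross R u = -cross v w ∧ cross R v = -cross w u ∧ cross R w = -cross u v ∧
    (∀ a b c : ℝ, cross R (a • u + b • v + c • w) =
      -(a • cross v w) - b • cross w u - c • cross u v) ∧
    cross R R'' = -R' := by
  rw [orthonormal_iff_ite] at h
  have huu : u 0 * u 0 + u 1 * u 1 + u 2 * u 2 + u 3 * u 3 + u 4 * u 4 + u 5 * u 5 + u 6 * u 6 = 1 := by
    have := h 0 0
    simp only [PiLp.inner_apply, RCLike.inner_apply, Fin.sum_univ_seven] at this
    simp at this
    linarith
  have hvv : v 0 * v 0 + v 1 * v 1 + v 2 * v 2 + v 3 * v 3 + v 4 * v 4 + v 5 * v 5 + v 6 * v 6 = 1 := by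
    have := h 1 1
    simp only [PiLp.inner_apply, RCLike.inner_apply, Fin.sum_univ_seven] at this
    simp at this
    linarith
  have hww : w 0 * w 0 + w 1 * w 1 + w 2 * w 2 + w 3 * w 3 + w 4 * w 4 + w 5 * w 5 + w 6 * w 6 = 1 := by
    have := h 2 2
    simp only [PiLp.inner_apply, RCLike.inner_apply, Fin.sum_univ_seven] at this
    simp at this
    linarith
  have huv : u 0 * v 0 + u 1 * v 1 + u 2 * v 2 + u 3 * v 3 + u 4 * v 4 + u 5 * v 5 + u 6 * v 6 = 0 := by
    have := h 0 1
    simp [PiLp.inner_apply, RCLike.inner_apply, Fin.sum_univ_seven] at this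
    linarith
  have huw : u 0 * w 0 + u 1 * w 1 + u 2 * w 2 + u 3 * w 3 + u 4 * w 4 + u 5 * w 5 + u 6 * w 6 = 0 := by
    have := h 0 2
    simp [PiLp.inner_apply, RCLike.inner_apply, Fin.sum_univ_seven] at this
    linarith
  have hvw : v 0 * w 0 + v 1 * w 1 + v 2 * w 2 + v 3 * w 3 + v 4 * w 4 + v 5 * w 5 + v 6 * w 6 = 0 := by
    have := h 1 2
    simp [PiLp.inner_apply, RCLike.inner_apply, Fin.sum_univ_seven] at this
    linarith
  have hphi : (u 0*v 1*w 2 - u 0*v 2*w 1 + u 0*v 3*w 4 - u 0*v 4*w 3 + u 0*v 5*w 6 - u 0*v 6*w 5 - u 1*v 0*w 2 + u 1*v 2*w 0 + u 1*v 3*w 5 - u 1*v 4*w 6 - u 1*v 5*w 3 + u 1*v 6*w 4 + u 2*v 0*w 1 - u 2*v 1*w 0 - u 2*v 3*w 6 - u 2*v 4*w 5 + u 2*v 5*w 4 + u 2*v 6*w 3 - u 3*v 0*w 4 - u 3*v 1*w 5 + u 3*v 2*w 6 + u 3*v 4*w 0 + u 3*v 5*w 1 - u 3*v 6*w 2 +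 u 4*v 0*w 3 + u 4*v 1*w 6 + u 4*v 2*w 5 - u 4*v 3*w 0 - u 4*v 5*w 2 - u 4*v 6*w 1 - u 5*v 0*w 6 + u 5*v 1*w 3 - u 5*v 2*w 4 - u 5*v 3*w 1 + u 5*v 4*w 2 + u 5*v 6*w 0 + u 6*v 0*w 5 - u 6*v 1*w 4 - u 6*v 2*w 3 + u 6*v 3*w 2 + u 6*v 4*w 1 - u 6*v 5*w 0) = 0 := by
    rw [← hφ]; simp [phi0, Matrix.det_fin_three]; try ring
  have k1 : ∀ i, cross (chi u v w) u i = -(cross v w i) := by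
    intro i; fin_cases i
    · simp [cross, chi, phi0, starPhi0, Matrix.det_fin_three, det_fin_four', EuclideanSpace.single_apply]
      linear_combination (-(v 1*w 2 - v 2*w 1 + v 3*w 4 - v 4*w 3 + v 5*w 6 - v 6*w 5)) * huu + (-(- u 1*w 2 + u 2*w 1 - u 3*w 4 + u 4*w 3 - u 5*w 6 + u 6*w 5)) * huv + (-(u 1*v 2 - u 2*v 1 + u 3*v 4 - u 4*v 3 + u 5*v 6 - u 6*v 5)) * huw + (u 0) * hphi
    · simp [cross, chi, phi0, starPhi0, Matrix.det_fin_three, det_fin_four', EuclideanSpace.single_apply]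
      linear_combination (-(- v 0*w 2 + v 2*w 0 + v 3*w 5 - v 4*w 6 - v 5*w 3 + v 6*w 4)) * huu + (-(u 0*w 2 - u 2*w 0 - u 3*w 5 + u 4*w 6 + u 5*w 3 - u 6*w 4)) * huv + (-(- u 0*v 2 + u 2*v 0 + u 3*v 5 - u 4*v 6 - u 5*v 3 + u 6*v 4)) * huw + (u 1) * hphi
    · simp [cross, chi, phi0, starPhi0, Matrix.det_fin_three, det_fin_four', EuclideanSpace.single_apply]
      linear_combination (-(v 0*w 1 - v 1*w 0 - v 3*w 6 - v 4*w 5 + v 5*w 4 + v 6*w 3)) * huu + (-(- u 0*w 1 + u 1*w 0 + u 3*w 6 + u 4*w 5 - u 5*w 4 - u 6*w 3)) * huv + (-(u 0*v 1 - u 1*v 0 - u 3*v 6 - u 4*v 5 + u 5*v 4 + u 6*v 3)) * huw + (u 2) * hphi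
    · simp [cross, chi, phi0, starPhi0, Matrix.det_fin_three, det_fin_four', EuclideanSpace.single_apply]
      linear_combination (-(- v 0*w 4 - v 1*w 5 + v 2*w 6 + v 4*w 0 + v 5*w 1 - v 6*w 2)) * huu + (-(u 0*w 4 + u 1*w 5 - u 2*w 6 - u 4*w 0 - u 5*w 1 + u 6*w 2)) * huv + (-(- u 0*v 4 - u 1*v 5 + u 2*v 6 + u 4*v 0 + u 5*v 1 - u 6*v 2)) * huw + (u 3) * hphi
    · simp [cross, chi, phi0, starPhi0, Matrix.det_fin_three, det_fin_four', EuclideanSpace.single_apply]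
      linear_combination (-(v 0*w 3 + v 1*w 6 + v 2*w 5 - v 3*w 0 - v 5*w 2 - v 6*w 1)) * huu + (-(- u 0*w 3 - u 1*w 6 - u 2*w 5 + u 3*w 0 + u 5*w 2 + u 6*w 1)) * huv + (-(u 0*v 3 + u 1*v 6 + u 2*v 5 - u 3*v 0 - u 5*v 2 - u 6*v 1)) * huw + (u 4) * hphi
    · simp [cross, chi, phi0, starPhi0, Matrix.det_fin_three, det_fin_four', EuclideanSpace.single_apply]
      linear_combination (-(- v 0*w 6 + v 1*w 3 - v 2*w 4 - v 3*w 1 + v 4*w 2 + v 6*w 0)) * huu + (-(u 0*w 6 - u 1*w 3 + u 2*w 4 + u 3*w 1 - u 4*w 2 - u 6*w 0)) * huv + (-(- u 0*v 6 + u 1*v 3 - u 2*v 4 - u 3*v 1 + u 4*v 2 + u 6*v 0)) * huw + (u 5) * hphi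
    · simp [cross, chi, phi0, starPhi0, Matrix.det_fin_three, det_fin_four', EuclideanSpace.single_apply]
      linear_combination (-(v 0*w 5 - v 1*w 4 - v 2*w 3 + v 3*w 2 + v 4*w 1 - v 5*w 0)) * huu + (-(- u 0*w 5 + u 1*w 4 + u 2*w 3 - u 3*w 2 - u 4*w 1 + u 5*w 0)) * huv + (-(u 0*v 5 - u 1*v 4 - u 2*v 3 + u 3*v 2 + u 4*v 1 - u 5*v 0)) * huw + (u 6) * hphi
  have k2 : ∀ i, cross (chi u v w) v i = -(cross w u i) := by
    intro i; fin_cases i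
    · simp [cross, chi, phi0, starPhi0, Matrix.det_fin_three, det_fin_four', EuclideanSpace.single_apply]
      linear_combination (-(v 1*w 2 - v 2*w 1 + v 3*w 4 - v 4*w 3 + v 5*w 6 - v 6*w 5)) * huv + (-(- u 1*w 2 + u 2*w 1 - u 3*w 4 + u 4*w 3 - u 5*w 6 + u 6*w 5)) * hvv + (-(u 1*v 2 - u 2*v 1 + u 3*v 4 - u 4*v 3 + u 5*v 6 - u 6*v 5)) * hvw + (v 0) * hphi
    · simp [cross, chi, phi0, starPhi0, Matrix.det_fin_three, det_fin_four', EuclideanSpace.single_apply]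
      linear_combination (-(- v 0*w 2 + v 2*w 0 + v 3*w 5 - v 4*w 6 - v 5*w 3 + v 6*w 4)) * huv + (-(u 0*w 2 - u 2*w 0 - u 3*w 5 + u 4*w 6 + u 5*w 3 - u 6*w 4)) * hvv + (-(- u 0*v 2 + u 2*v 0 + u 3*v 5 - u 4*v 6 - u 5*v 3 + u 6*v 4)) * hvw + (v 1) * hphi
    · simp [cross, chi, phi0, starPhi0, Matrix.det_fin_three, det_fin_four', EuclideanSpace.single_apply]
      linear_combination (-(v 0*w 1 - v 1*w 0 - v 3*w 6 - v 4*w 5 + v 5*w 4 + v 6*w 3)) * huv + (-(- u 0*w 1 + u 1*w 0 + u 3*w 6 + u 4*w 5 - u 5*w 4 - u 6*w 3)) * hvv + (-(u 0*v 1 - u 1*v 0 - u 3*v 6 - u 4*v 5 + u 5*v 4 + u 6*v 3)) * hvw + (v 2) * hphi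
    · simp [cross, chi, phi0, starPhi0, Matrix.det_fin_three, det_fin_four', EuclideanSpace.single_apply]
      linear_combination (-(- v 0*w 4 - v 1*w 5 + v 2*w 6 + v 4*w 0 + v 5*w 1 - v 6*w 2)) * huv + (-(u 0*w 4 + u 1*w 5 - u 2*w 6 - u 4*w 0 - u 5*w 1 + u 6*w 2)) * hvv + (-(- u 0*v 4 - u 1*v 5 + u 2*v 6 + u 4*v 0 + u 5*v 1 - u 6*v 2)) * hvw + (v 3) * hphi
    · simp [cross, chi, phi0, starPhi0, Matrix.det_fin_three, det_fin_four', EuclideanSpace.single_apply]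
      linear_combination (-(v 0*w 3 + v 1*w 6 + v 2*w 5 - v 3*w 0 - v 5*w 2 - v 6*w 1)) * huv + (-(- u 0*w 3 - u 1*w 6 - u 2*w 5 + u 3*w 0 + u 5*w 2 + u 6*w 1)) * hvv + (-(u 0*v 3 + u 1*v 6 + u 2*v 5 - u 3*v 0 - u 5*v 2 - u 6*v 1)) * hvw + (v 4) * hphi
    · simp [cross, chi, phi0, starPhi0, Matrix.det_fin_three, det_fin_four', EuclideanSpace.single_apply]
      linear_combination (-(- v 0*w 6 + v 1*w 3 - v 2*w 4 - v 3*w 1 + v 4*w 2 + v 6*w 0)) * huv + (-(u 0*w 6 - u 1*w 3 + u 2*w 4 + u 3*w 1 - u 4*w 2 - u 6*w 0)) * hvv + (-(- u 0*v 6 + u 1*v 3 - u 2*v 4 - u 3*v 1 + u 4*v 2 + u 6*v 0)) * hvw + (v 5) * hphi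
    · simp [cross, chi, phi0, starPhi0, Matrix.det_fin_three, det_fin_four', EuclideanSpace.single_apply]
      linear_combination (-(v 0*w 5 - v 1*w 4 - v 2*w 3 + v 3*w 2 + v 4*w 1 - v 5*w 0)) * huv + (-(- u 0*w 5 + u 1*w 4 + u 2*w 3 - u 3*w 2 - u 4*w 1 + u 5*w 0)) * hvv + (-(u 0*v 5 - u 1*v 4 - u 2*v 3 + u 3*v 2 + u 4*v 1 - u 5*v 0)) * hvw + (v 6) * hphi
  have k3 : ∀ i, cross (chi u v w) w i = -(cross u v i) := by
    intro i; fin_cases i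
    · simp [cross, chi, phi0, starPhi0, Matrix.det_fin_three, det_fin_four', EuclideanSpace.single_apply]
      linear_combination (-(v 1*w 2 - v 2*w 1 + v 3*w 4 - v 4*w 3 + v 5*w 6 - v 6*w 5)) * huw + (-(- u 1*w 2 + u 2*w 1 - u 3*w 4 + u 4*w 3 - u 5*w 6 + u 6*w 5)) * hvw + (-(u 1*v 2 - u 2*v 1 + u 3*v 4 - u 4*v 3 + u 5*v 6 - u 6*v 5)) * hww + (w 0) * hphi
    · simp [cross, chi, phi0, starPhi0, Matrix.det_fin_three, det_fin_four', EuclideanSpace.single_apply]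
      linear_combination (-(- v 0*w 2 + v 2*w 0 + v 3*w 5 - v 4*w 6 - v 5*w 3 + v 6*w 4)) * huw + (-(u 0*w 2 - u 2*w 0 - u 3*w 5 + u 4*w 6 + u 5*w 3 - u 6*w 4)) * hvw + (-(- u 0*v 2 + u 2*v 0 + u 3*v 5 - u 4*v 6 - u 5*v 3 + u 6*v 4)) * hww + (w 1) * hphi
    · simp [cross, chi, phi0, starPhi0, Matrix.det_fin_three, det_fin_four', EuclideanSpace.single_apply]
      linear_combination (-(v 0*w 1 - v 1*w 0 - v 3*w 6 - v 4*w 5 + v 5*w 4 + v 6*w 3)) * huw + (-(- u 0*w 1 + u 1*w 0 + u 3*w 6 + u 4*w 5 - u 5*w 4 - u 6*w 3)) * hvw + (-(u 0*v 1 - u 1*v 0 - u 3*v 6 - u 4*v 5 + u 5*v 4 + u 6*v 3)) * hww + (w 2) * hphi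
    · simp [cross, chi, phi0, starPhi0, Matrix.det_fin_three, det_fin_four', EuclideanSpace.single_apply]
      linear_combination (-(- v 0*w 4 - v 1*w 5 + v 2*w 6 + v 4*w 0 + v 5*w 1 - v 6*w 2)) * huw + (-(u 0*w 4 + u 1*w 5 - u 2*w 6 - u 4*w 0 - u 5*w 1 + u 6*w 2)) * hvw + (-(- u 0*v 4 - u 1*v 5 + u 2*v 6 + u 4*v 0 + u 5*v 1 - u 6*v 2)) * hww + (w 3) * hphi
    · simp [cross, chi, phi0, starPhi0, Matrix.det_fin_three, det_fin_four', EuclideanSpace.single_apply]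
      linear_combination (-(v 0*w 3 + v 1*w 6 + v 2*w 5 - v 3*w 0 - v 5*w 2 - v 6*w 1)) * huw + (-(- u 0*w 3 - u 1*w 6 - u 2*w 5 + u 3*w 0 + u 5*w 2 + u 6*w 1)) * hvw + (-(u 0*v 3 + u 1*v 6 + u 2*v 5 - u 3*v 0 - u 5*v 2 - u 6*v 1)) * hww + (w 4) * hphi
    · simp [cross, chi, phi0, starPhi0, Matrix.det_fin_three, det_fin_four', EuclideanSpace.single_apply]
      linear_combination (-(- v 0*w 6 + v 1*w 3 - v 2*w 4 - v 3*w 1 + v 4*w 2 + v 6*w 0)) * huw + (-(u 0*w 6 - u 1*w 3 + u 2*w 4 + u 3*w 1 - u 4*w 2 - u 6*w 0)) * hvw + (-(- u 0*v 6 + u 1*v 3 - u 2*v 4 - u 3*v 1 + u 4*v 2 + u 6*v 0)) * hww + (w 5) * hphi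
    · simp [cross, chi, phi0, starPhi0, Matrix.det_fin_three, det_fin_four', EuclideanSpace.single_apply]
      linear_combination (-(v 0*w 5 - v 1*w 4 - v 2*w 3 + v 3*w 2 + v 4*w 1 - v 5*w 0)) * huw + (-(- u 0*w 5 + u 1*w 4 + u 2*w 3 - u 3*w 2 - u 4*w 1 + u 5*w 0)) * hvw + (-(u 0*v 5 - u 1*v 4 - u 2*v 3 + u 3*v 2 + u 4*v 1 - u 5*v 0)) * hww + (w 6) * hphi
  subst hR hR' hR''
  refine ⟨?_, ?_, ?_, ?_, ?_⟩
  · ext i; exact k1 i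
  · ext i; exact k2 i
  · ext i; exact k3 i
  · intro a b c; ext i
    rw [cross_comb, k1 i, k2 i, k3 i]
    show a * -(cross v w i) + b * -(cross w u i) + c * -(cross u v i)
      = -(a * cross v w i) - b * cross w u i - c * cross u v i
    ring
  · have hc : ((Real.sqrt 3)⁻¹ • (u + v + w) : V7)
        = (Real.sqrt 3)⁻¹ • u + (Real.sqrt 3)⁻¹ • v + (Real.sqrt 3)⁻¹ • w := by module
    rw [hc]; ext i
    rw [cross_comb, k1 i, k2 i, k3 i]
    show (Real.sqrt 3)⁻¹ * -(cross v w i) + (Real.sqrt 3)⁻¹ * -(cross w u i)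
        + (Real.sqrt 3)⁻¹ * -(cross u v i)
      = -((Real.sqrt 3)⁻¹ * (cross u v i + cross v w i + cross w u i))
    ring

end
end

section
/- Let (u,v,w) be a G₂-frame in ℝ⁷ (orthonormal with φ₀(u,v,w)=0), R = χ(u,v,w) and R′ = (u×v+v×w+w×u)/√3. Then √3 (R′×u) = R + v − w, √3 (R′×v) = R + w − u, and √3 (R′×w) = R + u − v. -/
open scoped RealInnerProductSpace

noncomputable section

lemma det_fin_four'_s12 (a b c d e f g h i j k l m n o p : ℝ) :
    Matrix.det !![a,b,c,d; e,f,g,h; i,j,k,l; m,n,o,p] =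
      a*(f*(k*p-l*o) - g*(j*p-l*n) + h*(j*o-k*n))
      - b*(e*(k*p-l*o) - g*(i*p-l*m) + h*(i*o-k*m))
      + c*(e*(j*p-l*n) - f*(i*p-l*m) + h*(i*n-j*m))
      - d*(e*(j*o-k*n) - f*(i*o-k*m) + g*(i*n-j*m)) := by
  rw [Matrix.det_succ_row_zero]
  simp [Fin.sum_univ_succ, Matrix.det_fin_three, Matrix.submatrix, Fin.succAbove,
    Fin.castSucc, Fin.castAdd, Fin.castLE, Matrix.cons_val_succ]
  ring


lemma cross_add_left (x y z : V7) : cross (x + y) z = cross x z + cross y z := by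
  ext i
  simp only [cross, chi, phi0, starPhi0, Matrix.det_fin_three, det_fin_four'_s12,
    Matrix.cons_val', Matrix.cons_val_zero, Matrix.cons_val_one, Matrix.head_cons,
    Matrix.head_fin_const, Matrix.cons_val_fin_one, Matrix.empty_val',
    Matrix.of_apply, Matrix.cons_val_two, Matrix.cons_val_three, Matrix.tail_cons,
    EuclideanSpace.single_apply, reduceIte, Fin.reduceEq, one_mul, mul_one, mul_zero,
    zero_mul, add_zero, zero_add, sub_zero, zero_sub, neg_zero, neg_neg, neg_mul, mul_neg,
    PiLp.add_apply, PiLp.sub_apply, PiLp.smul_apply, PiLp.zero_apply, smul_eq_mul,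
    PiLp.inner_apply, RCLike.inner_apply, conj_trivial, Fin.sum_univ_seven, PiLp.toLp_apply]
  ring

lemma cross_smul_left (r : ℝ) (x z : V7) : cross (r • x) z = r • cross x z := by
  ext i
  simp only [cross, chi, phi0, starPhi0, Matrix.det_fin_three, det_fin_four'_s12,
    Matrix.cons_val', Matrix.cons_val_zero, Matrix.cons_val_one, Matrix.head_cons,
    Matrix.head_fin_const, Matrix.cons_val_fin_one, Matrix.empty_val',
    Matrix.of_apply, Matrix.cons_val_two, Matrix.cons_val_three, Matrix.tail_cons,
    EuclideanSpace.single_apply, reduceIte, Fin.reduceEq, one_mul, mul_one, mul_zero,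
    zero_mul, add_zero, zero_add, sub_zero, zero_sub, neg_zero, neg_neg, neg_mul, mul_neg,
    PiLp.add_apply, PiLp.sub_apply, PiLp.smul_apply, PiLp.zero_apply, smul_eq_mul,
    PiLp.inner_apply, RCLike.inner_apply, conj_trivial, Fin.sum_univ_seven, PiLp.toLp_apply]
  ring

lemma chi_aba (a b : V7) : chi a b a = 0 := by
  ext i
  simp only [cross, chi, phi0, starPhi0, Matrix.det_fin_three, det_fin_four'_s12,
    Matrix.cons_val', Matrix.cons_val_zero, Matrix.cons_val_one, Matrix.head_cons,
    Matrix.head_fin_const, Matrix.cons_val_fin_one, Matrix.empty_val',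
    Matrix.of_apply, Matrix.cons_val_two, Matrix.cons_val_three, Matrix.tail_cons,
    EuclideanSpace.single_apply, reduceIte, Fin.reduceEq, one_mul, mul_one, mul_zero,
    zero_mul, add_zero, zero_add, sub_zero, zero_sub, neg_zero, neg_neg, neg_mul, mul_neg,
    PiLp.add_apply, PiLp.sub_apply, PiLp.smul_apply, PiLp.zero_apply, smul_eq_mul,
    PiLp.inner_apply, RCLike.inner_apply, conj_trivial, Fin.sum_univ_seven, PiLp.toLp_apply]
  ring

lemma chi_abb (a b : V7) : chi a b b = 0 := by
  ext i
  simp only [cross, chi, phi0, starPhi0, Matrix.det_fin_three, det_fin_four'_s12,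
    Matrix.cons_val', Matrix.cons_val_zero, Matrix.cons_val_one, Matrix.head_cons,
    Matrix.head_fin_const, Matrix.cons_val_fin_one, Matrix.empty_val',
    Matrix.of_apply, Matrix.cons_val_two, Matrix.cons_val_three, Matrix.tail_cons,
    EuclideanSpace.single_apply, reduceIte, Fin.reduceEq, one_mul, mul_one, mul_zero,
    zero_mul, add_zero, zero_add, sub_zero, zero_sub, neg_zero, neg_neg, neg_mul, mul_neg,
    PiLp.add_apply, PiLp.sub_apply, PiLp.smul_apply, PiLp.zero_apply, smul_eq_mul,
    PiLp.inner_apply, RCLike.inner_apply, conj_trivial, Fin.sum_univ_seven, PiLp.toLp_apply]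
  ring

lemma chi_cyc (a b c : V7) : chi a b c = chi c a b := by
  ext i
  simp only [cross, chi, phi0, starPhi0, Matrix.det_fin_three, det_fin_four'_s12,
    Matrix.cons_val', Matrix.cons_val_zero, Matrix.cons_val_one, Matrix.head_cons,
    Matrix.head_fin_const, Matrix.cons_val_fin_one, Matrix.empty_val',
    Matrix.of_apply, Matrix.cons_val_two, Matrix.cons_val_three, Matrix.tail_cons,
    EuclideanSpace.single_apply, reduceIte, Fin.reduceEq, one_mul, mul_one, mul_zero,
    zero_mul, add_zero, zero_add, sub_zero, zero_sub, neg_zero, neg_neg, neg_mul, mul_neg,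
    PiLp.add_apply, PiLp.sub_apply, PiLp.smul_apply, PiLp.zero_apply, smul_eq_mul,
    PiLp.inner_apply, RCLike.inner_apply, conj_trivial, Fin.sum_univ_seven, PiLp.toLp_apply]
  ring


lemma crossCross7_comp0 (a b c : V7) :
    (cross (cross a b) c) 0 = (chi a b c + ⟪a,c⟫ • b - ⟪b,c⟫ • a) 0 := by
  simp only [cross, chi, phi0, starPhi0, Matrix.det_fin_three, det_fin_four'_s12,
    Matrix.cons_val', Matrix.cons_val_zero, Matrix.cons_val_one, Matrix.head_cons,
    Matrix.head_fin_const, Matrix.cons_val_fin_one, Matrix.empty_val',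
    Matrix.of_apply, Matrix.cons_val_two, Matrix.cons_val_three, Matrix.tail_cons,
    EuclideanSpace.single_apply, reduceIte, Fin.reduceEq, one_mul, mul_one, mul_zero,
    zero_mul, add_zero, zero_add, sub_zero, zero_sub, neg_zero, neg_neg, neg_mul, mul_neg,
    PiLp.add_apply, PiLp.sub_apply, PiLp.smul_apply, PiLp.zero_apply, smul_eq_mul,
    PiLp.inner_apply, RCLike.inner_apply, conj_trivial, Fin.sum_univ_seven, PiLp.toLp_apply]
  ring


lemma crossCross7_comp1 (a b c : V7) :
    (cross (cross a b) c) 1 = (chi a b c + ⟪a,c⟫ • b - ⟪b,c⟫ • a) 1 := by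
  simp only [cross, chi, phi0, starPhi0, Matrix.det_fin_three, det_fin_four'_s12,
    Matrix.cons_val', Matrix.cons_val_zero, Matrix.cons_val_one, Matrix.head_cons,
    Matrix.head_fin_const, Matrix.cons_val_fin_one, Matrix.empty_val',
    Matrix.of_apply, Matrix.cons_val_two, Matrix.cons_val_three, Matrix.tail_cons,
    EuclideanSpace.single_apply, reduceIte, Fin.reduceEq, one_mul, mul_one, mul_zero,
    zero_mul, add_zero, zero_add, sub_zero, zero_sub, neg_zero, neg_neg, neg_mul, mul_neg,
    PiLp.add_apply, PiLp.sub_apply, PiLp.smul_apply, PiLp.zero_apply, smul_eq_mul,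
    PiLp.inner_apply, RCLike.inner_apply, conj_trivial, Fin.sum_univ_seven, PiLp.toLp_apply]
  ring


lemma crossCross7_comp2 (a b c : V7) :
    (cross (cross a b) c) 2 = (chi a b c + ⟪a,c⟫ • b - ⟪b,c⟫ • a) 2 := by
  simp only [cross, chi, phi0, starPhi0, Matrix.det_fin_three, det_fin_four'_s12,
    Matrix.cons_val', Matrix.cons_val_zero, Matrix.cons_val_one, Matrix.head_cons,
    Matrix.head_fin_const, Matrix.cons_val_fin_one, Matrix.empty_val',
    Matrix.of_apply, Matrix.cons_val_two, Matrix.cons_val_three, Matrix.tail_cons,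
    EuclideanSpace.single_apply, reduceIte, Fin.reduceEq, one_mul, mul_one, mul_zero,
    zero_mul, add_zero, zero_add, sub_zero, zero_sub, neg_zero, neg_neg, neg_mul, mul_neg,
    PiLp.add_apply, PiLp.sub_apply, PiLp.smul_apply, PiLp.zero_apply, smul_eq_mul,
    PiLp.inner_apply, RCLike.inner_apply, conj_trivial, Fin.sum_univ_seven, PiLp.toLp_apply]
  ring


lemma crossCross7_comp3 (a b c : V7) :
    (cross (cross a b) c) 3 = (chi a b c + ⟪a,c⟫ • b - ⟪b,c⟫ • a) 3 := by
  simp only [cross, chi, phi0, starPhi0, Matrix.det_fin_three, det_fin_four'_s12,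
    Matrix.cons_val', Matrix.cons_val_zero, Matrix.cons_val_one, Matrix.head_cons,
    Matrix.head_fin_const, Matrix.cons_val_fin_one, Matrix.empty_val',
    Matrix.of_apply, Matrix.cons_val_two, Matrix.cons_val_three, Matrix.tail_cons,
    EuclideanSpace.single_apply, reduceIte, Fin.reduceEq, one_mul, mul_one, mul_zero,
    zero_mul, add_zero, zero_add, sub_zero, zero_sub, neg_zero, neg_neg, neg_mul, mul_neg,
    PiLp.add_apply, PiLp.sub_apply, PiLp.smul_apply, PiLp.zero_apply, smul_eq_mul,
    PiLp.inner_apply, RCLike.inner_apply, conj_trivial, Fin.sum_univ_seven, PiLp.toLp_apply]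
  ring


lemma crossCross7_comp4 (a b c : V7) :
    (cross (cross a b) c) 4 = (chi a b c + ⟪a,c⟫ • b - ⟪b,c⟫ • a) 4 := by
  simp only [cross, chi, phi0, starPhi0, Matrix.det_fin_three, det_fin_four'_s12,
    Matrix.cons_val', Matrix.cons_val_zero, Matrix.cons_val_one, Matrix.head_cons,
    Matrix.head_fin_const, Matrix.cons_val_fin_one, Matrix.empty_val',
    Matrix.of_apply, Matrix.cons_val_two, Matrix.cons_val_three, Matrix.tail_cons,
    EuclideanSpace.single_apply, reduceIte, Fin.reduceEq, one_mul, mul_one, mul_zero,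
    zero_mul, add_zero, zero_add, sub_zero, zero_sub, neg_zero, neg_neg, neg_mul, mul_neg,
    PiLp.add_apply, PiLp.sub_apply, PiLp.smul_apply, PiLp.zero_apply, smul_eq_mul,
    PiLp.inner_apply, RCLike.inner_apply, conj_trivial, Fin.sum_univ_seven, PiLp.toLp_apply]
  ring


lemma crossCross7_comp5 (a b c : V7) :
    (cross (cross a b) c) 5 = (chi a b c + ⟪a,c⟫ • b - ⟪b,c⟫ • a) 5 := by
  simp only [cross, chi, phi0, starPhi0, Matrix.det_fin_three, det_fin_four'_s12,
    Matrix.cons_val', Matrix.cons_val_zero, Matrix.cons_val_one, Matrix.head_cons,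
    Matrix.head_fin_const, Matrix.cons_val_fin_one, Matrix.empty_val',
    Matrix.of_apply, Matrix.cons_val_two, Matrix.cons_val_three, Matrix.tail_cons,
    EuclideanSpace.single_apply, reduceIte, Fin.reduceEq, one_mul, mul_one, mul_zero,
    zero_mul, add_zero, zero_add, sub_zero, zero_sub, neg_zero, neg_neg, neg_mul, mul_neg,
    PiLp.add_apply, PiLp.sub_apply, PiLp.smul_apply, PiLp.zero_apply, smul_eq_mul,
    PiLp.inner_apply, RCLike.inner_apply, conj_trivial, Fin.sum_univ_seven, PiLp.toLp_apply]
  ring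


lemma crossCross7_comp6 (a b c : V7) :
    (cross (cross a b) c) 6 = (chi a b c + ⟪a,c⟫ • b - ⟪b,c⟫ • a) 6 := by
  simp only [cross, chi, phi0, starPhi0, Matrix.det_fin_three, det_fin_four'_s12,
    Matrix.cons_val', Matrix.cons_val_zero, Matrix.cons_val_one, Matrix.head_cons,
    Matrix.head_fin_const, Matrix.cons_val_fin_one, Matrix.empty_val',
    Matrix.of_apply, Matrix.cons_val_two, Matrix.cons_val_three, Matrix.tail_cons,
    EuclideanSpace.single_apply, reduceIte, Fin.reduceEq, one_mul, mul_one, mul_zero,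
    zero_mul, add_zero, zero_add, sub_zero, zero_sub, neg_zero, neg_neg, neg_mul, mul_neg,
    PiLp.add_apply, PiLp.sub_apply, PiLp.smul_apply, PiLp.zero_apply, smul_eq_mul,
    PiLp.inner_apply, RCLike.inner_apply, conj_trivial, Fin.sum_univ_seven, PiLp.toLp_apply]
  ring


lemma crossCross7 (a b c : V7) :
    cross (cross a b) c = chi a b c + ⟪a,c⟫ • b - ⟪b,c⟫ • a := by
  ext i
  fin_cases i
  · exact crossCross7_comp0 a b c
  · exact crossCross7_comp1 a b c
  · exact crossCross7_comp2 a b c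
  · exact crossCross7_comp3 a b c
  · exact crossCross7_comp4 a b c
  · exact crossCross7_comp5 a b c
  · exact crossCross7_comp6 a b c

/-- for a G₂-frame (u,v,w), R = χ(u,v,w) and
R′ = (u×v+v×w+w×u)/√3: √3(R′×u) = R+v−w, √3(R′×v) = R+w−u, √3(R′×w) = R+u−v. -/
theorem cross_R_prime (u v w : V7) (h : Orthonormal ℝ ![u, v, w])
    (hφ : phi0 ![u, v, w] = 0) (R R' : V7) (hR : R = chi u v w)
    (hR' : R' = (Real.sqrt 3)⁻¹ • (cross u v + cross v w + cross w u)) :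
    Real.sqrt 3 • cross R' u = R + v - w ∧
    Real.sqrt 3 • cross R' v = R + w - u ∧
    Real.sqrt 3 • cross R' w = R + u - v := by
  have hs : (Real.sqrt 3) • ((Real.sqrt 3)⁻¹ : ℝ) • (1:ℝ) = 1 := by
    rw [smul_eq_mul, smul_eq_mul, mul_one, mul_inv_cancel₀ (by positivity : Real.sqrt 3 ≠ 0)]
  have h3 : Real.sqrt 3 ≠ 0 := by positivity
  have hite := orthonormal_iff_ite.mp h
  have huu : ⟪u,u⟫ = 1 := by simpa using hite 0 0
  have hvv : ⟪v,v⟫ = 1 := by simpa using hite 1 1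
  have hww : ⟪w,w⟫ = 1 := by simpa using hite 2 2
  have huv : ⟪u,v⟫ = 0 := by simpa using hite 0 1
  have hvu : ⟪v,u⟫ = 0 := by simpa using hite 1 0
  have huw : ⟪u,w⟫ = 0 := by simpa using hite 0 2
  have hwu : ⟪w,u⟫ = 0 := by simpa using hite 2 0
  have hvw : ⟪v,w⟫ = 0 := by simpa using hite 1 2
  have hwv : ⟪w,v⟫ = 0 := by simpa using hite 2 1
  have key : ∀ z : V7, Real.sqrt 3 • cross R' z =
      cross (cross u v) z + cross (cross v w) z + cross (cross w u) z := by
    intro z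
    rw [hR', cross_smul_left, smul_smul, mul_inv_cancel₀ h3, one_smul,
      cross_add_left, cross_add_left]
  refine ⟨?_, ?_, ?_⟩
  · rw [key, crossCross7, crossCross7, crossCross7, chi_aba, chi_abb, hR,
      show chi v w u = chi u v w from chi_cyc v w u,
      huu, hvu, hwu]
    module
  · rw [key, crossCross7, crossCross7, crossCross7, chi_abb, chi_aba, hR,
      show chi w u v = chi u v w from by rw [chi_cyc w u v, chi_cyc v w u],
      huv, hvv, hwv]
    module
  · rw [key, crossCross7, crossCross7, crossCross7, chi_abb, chi_aba, hR,
      huw, hvw, hww]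
    module

end
end

section
/- Let (u,v,w) be a G₂-frame in ℝ⁷ (orthonormal with φ₀(u,v,w)=0). Then (v×u)×(w×v) = −(w×u). -/
open scoped RealInnerProductSpace

noncomputable section

private lemma cross_apply0 (x y : V7) : cross x y (0 : Fin 7) = x 1*y 2 + (-1)*x 2*y 1 + x 3*y 4 + (-1)*x 4*y 3 + x 5*y 6 + (-1)*x 6*y 5 := by
  first
  | (simp [cross, phi0, Matrix.det_fin_three, EuclideanSpace.single_apply]; ring)
  | simp [cross, phi0, Matrix.det_fin_three, EuclideanSpace.single_apply]

private lemma cross_apply1 (x y : V7) : cross x y (1 : Fin 7) = (-1)*x 0*y 2 + x 2*y 0 + x 3*y 5 + (-1)*x 4*y 6 + (-1)*x 5*y 3 + x 6*y 4 := by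
  first
  | (simp [cross, phi0, Matrix.det_fin_three, EuclideanSpace.single_apply]; ring)
  | simp [cross, phi0, Matrix.det_fin_three, EuclideanSpace.single_apply]

private lemma cross_apply2 (x y : V7) : cross x y (2 : Fin 7) = x 0*y 1 + (-1)*x 1*y 0 + (-1)*x 3*y 6 + (-1)*x 4*y 5 + x 5*y 4 + x 6*y 3 := by
  first
  | (simp [cross, phi0, Matrix.det_fin_three, EuclideanSpace.single_apply]; ring)
  | simp [cross, phi0, Matrix.det_fin_three, EuclideanSpace.single_apply]

private lemma cross_apply3 (x y : V7) : cross x y (3 : Fin 7) = (-1)*x 0*y 4 + (-1)*x 1*y 5 + x 2*y 6 + x 4*y 0 + x 5*y 1 + (-1)*x 6*y 2 := by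
  first
  | (simp [cross, phi0, Matrix.det_fin_three, EuclideanSpace.single_apply]; ring)
  | simp [cross, phi0, Matrix.det_fin_three, EuclideanSpace.single_apply]

private lemma cross_apply4 (x y : V7) : cross x y (4 : Fin 7) = x 0*y 3 + x 1*y 6 + x 2*y 5 + (-1)*x 3*y 0 + (-1)*x 5*y 2 + (-1)*x 6*y 1 := by
  first
  | (simp [cross, phi0, Matrix.det_fin_three, EuclideanSpace.single_apply]; ring)
  | simp [cross, phi0, Matrix.det_fin_three, EuclideanSpace.single_apply]

private lemma cross_apply5 (x y : V7) : cross x y (5 : Fin 7) = (-1)*x 0*y 6 + x 1*y 3 + (-1)*x 2*y 4 + (-1)*x 3*y 1 + x 4*y 2 + x 6*y 0 := by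
  first
  | (simp [cross, phi0, Matrix.det_fin_three, EuclideanSpace.single_apply]; ring)
  | simp [cross, phi0, Matrix.det_fin_three, EuclideanSpace.single_apply]

private lemma cross_apply6 (x y : V7) : cross x y (6 : Fin 7) = x 0*y 5 + (-1)*x 1*y 4 + (-1)*x 2*y 3 + x 3*y 2 + x 4*y 1 + (-1)*x 5*y 0 := by
  first
  | (simp [cross, phi0, Matrix.det_fin_three, EuclideanSpace.single_apply]; ring)
  | simp [cross, phi0, Matrix.det_fin_three, EuclideanSpace.single_apply]

set_option maxHeartbeats 1000000 in
/-- for a G₂-frame (u,v,w), (v×u)×(w×v) = −(w×u). -/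
theorem cross_cross_identity (u v w : V7) (h : Orthonormal ℝ ![u, v, w])
    (hφ : phi0 ![u, v, w] = 0) :
    cross (cross v u) (cross w v) = -cross w u := by
  have hON := orthonormal_iff_ite.mp h
  have h2 : v 0 * v 0 + v 1 * v 1 + v 2 * v 2 + v 3 * v 3 + v 4 * v 4 + v 5 * v 5 + v 6 * v 6 = 1 := by
    have := hON 1 1
    rw [PiLp.inner_apply] at this
    simp [RCLike.inner_apply, Fin.sum_univ_seven,
      Matrix.cons_val_zero, Matrix.cons_val_one, Matrix.head_cons] at this
    linear_combination this
  have h4 : u 0 * v 0 + u 1 * v 1 + u 2 * v 2 + u 3 * v 3 + u 4 * v 4 + u 5 * v 5 + u 6 * v 6 = 0 := by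
    have := hON 0 1
    simp [PiLp.inner_apply, RCLike.inner_apply, Fin.sum_univ_seven,
      Matrix.cons_val_zero, Matrix.cons_val_one, Matrix.head_cons] at this
    linear_combination this
  have h6 : v 0 * w 0 + v 1 * w 1 + v 2 * w 2 + v 3 * w 3 + v 4 * w 4 + v 5 * w 5 + v 6 * w 6 = 0 := by
    have := hON 1 2
    simp [PiLp.inner_apply, RCLike.inner_apply, Fin.sum_univ_seven,
      Matrix.cons_val_zero, Matrix.cons_val_one, Matrix.head_cons] at this
    linear_combination this
  have h7 : u 0*v 1*w 2 + (-1)*u 0*v 2*w 1 + u 0*v 3*w 4 + (-1)*u 0*v 4*w 3 + u 0*v 5*w 6 + (-1)*u 0*v 6*w 5 + (-1)*u 1*v 0*w 2 + u 1*v 2*w 0 + u 1*v 3*w 5 + (-1)*u 1*v 4*w 6 + (-1)*u 1*v 5*w 3 + u 1*v 6*w 4 + u 2*v 0*w 1 + (-1)*u 2*v 1*w 0 + (-1)*u 2*v 3*w 6 + (-1)*u 2*v 4*w 5 + u 2*v 5*w 4 + u 2*v 6*w 3 + (-1)*u 3*v 0*w 4 + (-1)*u 3*v 1*w 5 + u 3*v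 2*w 6 + u 3*v 4*w 0 + u 3*v 5*w 1 + (-1)*u 3*v 6*w 2 + u 4*v 0*w 3 + u 4*v 1*w 6 + u 4*v 2*w 5 + (-1)*u 4*v 3*w 0 + (-1)*u 4*v 5*w 2 + (-1)*u 4*v 6*w 1 + (-1)*u 5*v 0*w 6 + u 5*v 1*w 3 + (-1)*u 5*v 2*w 4 + (-1)*u 5*v 3*w 1 + u 5*v 4*w 2 + u 5*v 6*w 0 + u 6*v 0*w 5 + (-1)*u 6*v 1*w 4 + (-1)*u 6*v 2*w 3 + u 6*v 3*w 2 + u 6*v 4*w 1 + (-1)*u 6*v 5*w 0 = 0 := by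
    have := hφ
    simp [phi0, Matrix.det_fin_three] at this
    linear_combination this
  ext i
  fin_cases i
  · show cross (cross v u) (cross w v) (0 : Fin 7) = (-cross w u) (0 : Fin 7)
    rw [PiLp.neg_apply, cross_apply0 (cross v u) (cross w v), cross_apply1 v u, cross_apply2 v u, cross_apply3 v u, cross_apply4 v u, cross_apply5 v u, cross_apply6 v u, cross_apply1 w v, cross_apply2 w v, cross_apply3 w v, cross_apply4 w v, cross_apply5 w v, cross_apply6 w v, cross_apply0 w u]
    linear_combination (exp := 1) (-((-1)*u 1*w 2 + u 2*w 1 + (-1)*u 3*w 4 + u 4*w 3 + (-1)*u 5*w 6 + u 6*w 5)) * h2 + ((-1)*v 1*w 2 + v 2*w 1 + (-1)*v 3*w 4 + v 4*w 3 + (-1)*v 5*w 6 + v 6*w 5) * h4 + (-(u 1*v 2 + (-1)*u 2*v 1 + u 3*v 4 + (-1)*u 4*v 3 + u 5*v 6 + (-1)*u 6*v 5)) * h6 + (2 * v 0) * h7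
  · show cross (cross v u) (cross w v) (1 : Fin 7) = (-cross w u) (1 : Fin 7)
    rw [PiLp.neg_apply, cross_apply1 (cross v u) (cross w v), cross_apply0 v u, cross_apply2 v u, cross_apply3 v u, cross_apply4 v u, cross_apply5 v u, cross_apply6 v u, cross_apply0 w v, cross_apply2 w v, cross_apply3 w v, cross_apply4 w v, cross_apply5 w v, cross_apply6 w v, cross_apply1 w u]
    linear_combination (exp := 1) (-(u 0*w 2 + (-1)*u 2*w 0 + (-1)*u 3*w 5 + u 4*w 6 + u 5*w 3 + (-1)*u 6*w 4)) * h2 + (v 0*w 2 + (-1)*v 2*w 0 + (-1)*v 3*w 5 + v 4*w 6 + v 5*w 3 + (-1)*v 6*w 4) * h4 + (-((-1)*u 0*v 2 + u 2*v 0 + u 3*v 5 + (-1)*u 4*v 6 + (-1)*u 5*v 3 + u 6*v 4)) * h6 + (2 * v 1) * h7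
  · show cross (cross v u) (cross w v) (2 : Fin 7) = (-cross w u) (2 : Fin 7)
    rw [PiLp.neg_apply, cross_apply2 (cross v u) (cross w v), cross_apply0 v u, cross_apply1 v u, cross_apply3 v u, cross_apply4 v u, cross_apply5 v u, cross_apply6 v u, cross_apply0 w v, cross_apply1 w v, cross_apply3 w v, cross_apply4 w v, cross_apply5 w v, cross_apply6 w v, cross_apply2 w u]
    linear_combination (exp := 1) (-((-1)*u 0*w 1 + u 1*w 0 + u 3*w 6 + u 4*w 5 + (-1)*u 5*w 4 + (-1)*u 6*w 3)) * h2 + ((-1)*v 0*w 1 + v 1*w 0 + v 3*w 6 + v 4*w 5 + (-1)*v 5*w 4 + (-1)*v 6*w 3) * h4 + (-(u 0*v 1 + (-1)*u 1*v 0 + (-1)*u 3*v 6 + (-1)*u 4*v 5 + u 5*v 4 + u 6*v 3)) * h6 + (2 * v 2) * h7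
  · show cross (cross v u) (cross w v) (3 : Fin 7) = (-cross w u) (3 : Fin 7)
    rw [PiLp.neg_apply, cross_apply3 (cross v u) (cross w v), cross_apply0 v u, cross_apply1 v u, cross_apply2 v u, cross_apply4 v u, cross_apply5 v u, cross_apply6 v u, cross_apply0 w v, cross_apply1 w v, cross_apply2 w v, cross_apply4 w v, cross_apply5 w v, cross_apply6 w v, cross_apply3 w u]
    linear_combination (exp := 1) (-(u 0*w 4 + u 1*w 5 + (-1)*u 2*w 6 + (-1)*u 4*w 0 + (-1)*u 5*w 1 + u 6*w 2)) * h2 + (v 0*w 4 + v 1*w 5 + (-1)*v 2*w 6 + (-1)*v 4*w 0 + (-1)*v 5*w 1 + v 6*w 2) * h4 + (-((-1)*u 0*v 4 + (-1)*u 1*v 5 + u 2*v 6 + u 4*v 0 + u 5*v 1 + (-1)*u 6*v 2)) * h6 + (2 * v 3) * h7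
  · show cross (cross v u) (cross w v) (4 : Fin 7) = (-cross w u) (4 : Fin 7)
    rw [PiLp.neg_apply, cross_apply4 (cross v u) (cross w v), cross_apply0 v u, cross_apply1 v u, cross_apply2 v u, cross_apply3 v u, cross_apply5 v u, cross_apply6 v u, cross_apply0 w v, cross_apply1 w v, cross_apply2 w v, cross_apply3 w v, cross_apply5 w v, cross_apply6 w v, cross_apply4 w u]
    linear_combination (exp := 1) (-((-1)*u 0*w 3 + (-1)*u 1*w 6 + (-1)*u 2*w 5 + u 3*w 0 + u 5*w 2 + u 6*w 1)) * h2 + ((-1)*v 0*w 3 + (-1)*v 1*w 6 + (-1)*v 2*w 5 + v 3*w 0 + v 5*w 2 + v 6*w 1) * h4 + (-(u 0*v 3 + u 1*v 6 + u 2*v 5 + (-1)*u 3*v 0 + (-1)*u 5*v 2 + (-1)*u 6*v 1)) * h6 + (2 * v 4) * h7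
  · show cross (cross v u) (cross w v) (5 : Fin 7) = (-cross w u) (5 : Fin 7)
    rw [PiLp.neg_apply, cross_apply5 (cross v u) (cross w v), cross_apply0 v u, cross_apply1 v u, cross_apply2 v u, cross_apply3 v u, cross_apply4 v u, cross_apply6 v u, cross_apply0 w v, cross_apply1 w v, cross_apply2 w v, cross_apply3 w v, cross_apply4 w v, cross_apply6 w v, cross_apply5 w u]
    linear_combination (exp := 1) (-(u 0*w 6 + (-1)*u 1*w 3 + u 2*w 4 + u 3*w 1 + (-1)*u 4*w 2 + (-1)*u 6*w 0)) * h2 + (v 0*w 6 + (-1)*v 1*w 3 + v 2*w 4 + v 3*w 1 + (-1)*v 4*w 2 + (-1)*v 6*w 0) * h4 + (-((-1)*u 0*v 6 + u 1*v 3 + (-1)*u 2*v 4 + (-1)*u 3*v 1 + u 4*v 2 + u 6*v 0)) * h6 + (2 * v 5) * h7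
  · show cross (cross v u) (cross w v) (6 : Fin 7) = (-cross w u) (6 : Fin 7)
    rw [PiLp.neg_apply, cross_apply6 (cross v u) (cross w v), cross_apply0 v u, cross_apply1 v u, cross_apply2 v u, cross_apply3 v u, cross_apply4 v u, cross_apply5 v u, cross_apply0 w v, cross_apply1 w v, cross_apply2 w v, cross_apply3 w v, cross_apply4 w v, cross_apply5 w v, cross_apply6 w u]
    linear_combination (exp := 1) (-((-1)*u 0*w 5 + u 1*w 4 + u 2*w 3 + (-1)*u 3*w 2 + (-1)*u 4*w 1 + u 5*w 0)) * h2 + ((-1)*v 0*w 5 + v 1*w 4 + v 2*w 3 + (-1)*v 3*w 2 + (-1)*v 4*w 1 + v 5*w 0) * h4 + (-(u 0*v 5 + (-1)*u 1*v 4 + (-1)*u 2*v 3 + u 3*v 2 + u 4*v 1 + (-1)*u 5*v 0)) * h6 + (2 * v 6) * h7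
end
end

section
/- Let (u,v,w) be a G₂-frame in ℝ⁷ (orthonormal with φ₀(u,v,w)=0). Then φ₀(u×v, v×w, w×u) = −1; hence the 3-dimensional subspace 𝔼 = span{u×v, v×w, w×u} is an associative 3-plane (φ₀ restricts to ±1 times its volume form). -/
open scoped RealInnerProductSpace

noncomputable section

set_option maxHeartbeats 4000000 in
lemma phi0_expand (a b c : V7) : phi0 ![a,b,c] = (a 0*b 1*c 2 + (-1)*a 0*b 2*c 1 + a 0*b 3*c 4 + (-1)*a 0*b 4*c 3 + a 0*b 5*c 6 + (-1)*a 0*b 6*c 5 + (-1)*a 1*b 0*c 2 + a 1*b 2*c 0 + a 1*b 3*c 5 + (-1)*a 1*b 4*c 6 + (-1)*a 1*b 5*c 3 + a 1*b 6*c 4 + a 2*b 0*c 1 + (-1)*a 2*b 1*c 0 + (-1)*a 2*b 3*c 6 + (-1)*a 2*b 4*c 5 + a 2*b 5*c 4 + a 2*b 6*c 3 + (-1)*a 3*b 0*c 4 + (-1)*a 3*b 1*c 5 + a 3*b 2*c 6 + a 3*b 4*c 0 + a 3*b 5*c 1 + (-1)*a 3*b 6*c 2 + a 4*b 0*c 3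 + a 4*b 1*c 6 + a 4*b 2*c 5 + (-1)*a 4*b 3*c 0 + (-1)*a 4*b 5*c 2 + (-1)*a 4*b 6*c 1 + (-1)*a 5*b 0*c 6 + a 5*b 1*c 3 + (-1)*a 5*b 2*c 4 + (-1)*a 5*b 3*c 1 + a 5*b 4*c 2 + a 5*b 6*c 0 + a 6*b 0*c 5 + (-1)*a 6*b 1*c 4 + (-1)*a 6*b 2*c 3 + a 6*b 3*c 2 + a 6*b 4*c 1 + (-1)*a 6*b 5*c 0) := by
  simp only [phi0, Matrix.det_fin_three, Matrix.cons_val', Matrix.cons_val_zero, Matrix.cons_val_one, Matrix.head_cons, Matrix.head_fin_const, Matrix.empty_val', Matrix.cons_val_fin_one, Matrix.cons_val_two, Matrix.tail_cons, Matrix.of_apply]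
  ring

lemma cross_c0 (a b : V7) : cross a b 0 = (a 1*b 2 + (-1)*a 2*b 1 + a 3*b 4 + (-1)*a 4*b 3 + a 5*b 6 + (-1)*a 6*b 5) := by
  rw [cross, PiLp.toLp_apply, phi0_expand]
  simp [EuclideanSpace.single_apply]

lemma cross_c1 (a b : V7) : cross a b 1 = ((-1)*a 0*b 2 + a 2*b 0 + a 3*b 5 + (-1)*a 4*b 6 + (-1)*a 5*b 3 + a 6*b 4) := by
  rw [cross, PiLp.toLp_apply, phi0_expand]
  simp [EuclideanSpace.single_apply]

lemma cross_c2 (a b : V7) : cross a b 2 = (a 0*b 1 + (-1)*a 1*b 0 + (-1)*a 3*b 6 + (-1)*a 4*b 5 + a 5*b 4 + a 6*b 3) := by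
  rw [cross, PiLp.toLp_apply, phi0_expand]
  simp [EuclideanSpace.single_apply]

lemma cross_c3 (a b : V7) : cross a b 3 = ((-1)*a 0*b 4 + (-1)*a 1*b 5 + a 2*b 6 + a 4*b 0 + a 5*b 1 + (-1)*a 6*b 2) := by
  rw [cross, PiLp.toLp_apply, phi0_expand]
  simp [EuclideanSpace.single_apply]

lemma cross_c4 (a b : V7) : cross a b 4 = (a 0*b 3 + a 1*b 6 + a 2*b 5 + (-1)*a 3*b 0 + (-1)*a 5*b 2 + (-1)*a 6*b 1) := by
  rw [cross, PiLp.toLp_apply, phi0_expand]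
  simp [EuclideanSpace.single_apply]

lemma cross_c5 (a b : V7) : cross a b 5 = ((-1)*a 0*b 6 + a 1*b 3 + (-1)*a 2*b 4 + (-1)*a 3*b 1 + a 4*b 2 + a 6*b 0) := by
  rw [cross, PiLp.toLp_apply, phi0_expand]
  simp [EuclideanSpace.single_apply]

lemma cross_c6 (a b : V7) : cross a b 6 = (a 0*b 5 + (-1)*a 1*b 4 + (-1)*a 2*b 3 + a 3*b 2 + a 4*b 1 + (-1)*a 5*b 0) := by
  rw [cross, PiLp.toLp_apply, phi0_expand]
  simp [EuclideanSpace.single_apply]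


set_option maxHeartbeats 16000000 in
/-- for a G₂-frame (u,v,w), φ₀(u×v, v×w, w×u) = −1, so the
3-plane 𝔼 = span{u×v, v×w, w×u} is associative. -/
theorem associative_E (u v w : V7) (h : Orthonormal ℝ ![u, v, w])
    (hφ : phi0 ![u, v, w] = 0) :
    phi0 ![cross u v, cross v w, cross w u] = -1 := by
  have key := orthonormal_iff_ite.mp h
  have ha : ⟪u, u⟫ = 1 := by simpa using key 0 0
  have hb : ⟪v, v⟫ = 1 := by simpa using key 1 1
  have hc : ⟪w, w⟫ = 1 := by simpa using key 2 2
  have hd : ⟪u, v⟫ = 0 := by simpa using key 0 1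
  have he : ⟪u, w⟫ = 0 := by simpa using key 0 2
  have hg : ⟪v, w⟫ = 0 := by simpa using key 1 2
  simp only [PiLp.inner_apply, RCLike.inner_apply, conj_trivial, Fin.sum_univ_seven] at ha hb hc hd he hg
  rw [phi0_expand] at hφ
  rw [phi0_expand]
  simp only [cross_c0, cross_c1, cross_c2, cross_c3, cross_c4, cross_c5, cross_c6]
  linear_combination (2*(u 0*v 1*w 2 + (-1)*u 0*v 2*w 1 + u 0*v 3*w 4 + (-1)*u 0*v 4*w 3 + u 0*v 5*w 6 + (-1)*u 0*v 6*w 5 + (-1)*u 1*v 0*w 2 + u 1*v 2*w 0 + u 1*v 3*w 5 + (-1)*u 1*v 4*w 6 + (-1)*u 1*v 5*w 3 + u 1*v 6*w 4 + u 2*v 0*w 1 + (-1)*u 2*v 1*w 0 + (-1)*u 2*v 3*w 6 + (-1)*u 2*v 4*w 5 + u 2*v 5*w 4 + u 2*v 6*w 3 + (-1)*u 3*v 0*w 4 + (-1)*u 3*v 1*w 5 + u 3*v 2*w 6 + u 3*v 4*w 0 + u 3*v 5*w 1 + (-1)*u 3*v 6*w 2 + u 4*v 0*w 3 + u 4*v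 1*w 6 + u 4*v 2*w 5 + (-1)*u 4*v 3*w 0 + (-1)*u 4*v 5*w 2 + (-1)*u 4*v 6*w 1 + (-1)*u 5*v 0*w 6 + u 5*v 1*w 3 + (-1)*u 5*v 2*w 4 + (-1)*u 5*v 3*w 1 + u 5*v 4*w 2 + u 5*v 6*w 0 + u 6*v 0*w 5 + (-1)*u 6*v 1*w 4 + (-1)*u 6*v 2*w 3 + u 6*v 3*w 2 + u 6*v 4*w 1 + (-1)*u 6*v 5*w 0))*hφ + (-((v 0*v 0 + v 1*v 1 + v 2*v 2 + v 3*v 3 + v 4*v 4 + v 5*v 5 + v 6*v 6)*(w 0*w 0 + w 1*w 1 + w 2*w 2 + w 3*w 3 + w 4*w 4 + w 5*w 5 + w 6*w 6)))*ha + (-(w 0*w 0 + w 1*w 1 + w 2*w 2 + w 3*w 3 + w 4*w 4 + w 5*w 5 + w 6*w 6))*hb + (-1)*hc + ((u 0*u 0 + u 1*u 1 + u 2*u 2 + u 3*u 3 + u 4*u 4 + u 5*u 5 + u 6*u 6)*(v 0*w 0 + v 1*w 1 + v 2*w 2 + v 3*w 3 + v 4*w 4 + v 5*w 5 + v 6*w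 6) - 2*(u 0*v 0 + u 1*v 1 + u 2*v 2 + u 3*v 3 + u 4*v 4 + u 5*v 5 + u 6*v 6)*(u 0*w 0 + u 1*w 1 + u 2*w 2 + u 3*w 3 + u 4*w 4 + u 5*w 5 + u 6*w 6))*hg + ((w 0*w 0 + w 1*w 1 + w 2*w 2 + w 3*w 3 + w 4*w 4 + w 5*w 5 + w 6*w 6)*(u 0*v 0 + u 1*v 1 + u 2*v 2 + u 3*v 3 + u 4*v 4 + u 5*v 5 + u 6*v 6))*hd + ((v 0*v 0 + v 1*v 1 + v 2*v 2 + v 3*v 3 + v 4*v 4 + v 5*v 5 + v 6*v 6)*(u 0*w 0 + u 1*w 1 + u 2*w 2 + u 3*w 3 + u 4*w 4 + u 5*w 5 + u 6*w 6))*he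


end
end
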